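/- arXiv:2602.17894 — 6 statements merged into one kernel-verified Lean document; each statement's English description precedes it below -/
import Mathlib

section
/- For every C > 0, the integral ∫_{C+3}^{∞} (φ(x+C) − φ(x−C))² / (Φ(x+C) − Φ(x−C)) dx is at most 0.02. -/
open MeasureTheory

/-- The standard normal density. -/
noncomputable def gaussPdf (x : ℝ) : ℝ :=
  (Real.sqrt (2 * Real.pi))⁻¹ * Real.exp (-(x ^ 2) / 2)

/-- The standard normal CDF. -/
noncomputable def gaussCdf (x : ℝ) : ℝ :=
  ∫ t in Set.Iic x, gaussPdf t

lemma gaussPdf_pos (x : ℝ) : 0 < gaussPdf x := by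
  unfold gaussPdf
  positivity

lemma integrable_gaussPdf : Integrable gaussPdf := by
  have h := (integrable_exp_neg_mul_sq (by norm_num : (0:ℝ) < 1/2)).const_mul
    (Real.sqrt (2 * Real.pi))⁻¹
  convert h using 2 with x
  unfold gaussPdf
  ring_nf

lemma gaussPdf_antitone {s t : ℝ} (h0 : 0 ≤ s) (h : s ≤ t) : gaussPdf t ≤ gaussPdf s := by
  unfold gaussPdf
  have h1 : Real.exp (-(t^2)/2) ≤ Real.exp (-(s^2)/2) := Real.exp_le_exp.2 (by nlinarith)
  have h2 : (0:ℝ) ≤ (Real.sqrt (2*Real.pi))⁻¹ := by positivity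
  exact mul_le_mul_of_nonneg_left h1 h2

lemma gaussPdf_add (a d : ℝ) : gaussPdf (a + d) = gaussPdf a * Real.exp (-(a*d + d^2/2)) := by
  unfold gaussPdf
  rw [mul_assoc, ← Real.exp_add]
  ring_nf

lemma gaussCdf_sub {a b : ℝ} (h : a ≤ b) :
    gaussCdf b - gaussCdf a = ∫ t in Set.Ioc a b, gaussPdf t := by
  unfold gaussCdf
  rw [intervalIntegral.integral_Iic_sub_Iic integrable_gaussPdf.integrableOn
    integrable_gaussPdf.integrableOn, intervalIntegral.integral_of_le h]

lemma denom_lb {C a : ℝ} (hC : 0 < C) (ha : 3 ≤ a) :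
    min (2*C) a⁻¹ * (gaussPdf a * Real.exp (-(19/18))) ≤ gaussCdf (a + 2*C) - gaussCdf a := by
  have ha0 : (0:ℝ) < a := by linarith
  set δ := min (2*C) a⁻¹ with hδdef
  have hδ0 : 0 < δ := lt_min (by linarith) (by positivity)
  have hδa : δ ≤ a⁻¹ := min_le_right _ _
  have hδC : δ ≤ 2*C := min_le_left _ _
  have haδ : a*δ ≤ 1 := by
    calc a*δ ≤ a*a⁻¹ := by nlinarith
    _ = 1 := mul_inv_cancel₀ ha0.ne'
  have hδ3 : δ ≤ 1/3 := by
    refine hδa.trans ?_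
    rw [show (1:ℝ)/3 = 3⁻¹ by norm_num]
    exact inv_anti₀ (by norm_num) ha
  have hpdf : gaussPdf a * Real.exp (-(19/18)) ≤ gaussPdf (a+δ) := by
    rw [gaussPdf_add]
    have hle : -(19/18 : ℝ) ≤ -(a*δ + δ^2/2) := by nlinarith
    exact mul_le_mul_of_nonneg_left (Real.exp_le_exp.2 hle) (gaussPdf_pos a).le
  rw [gaussCdf_sub (by linarith)]
  calc δ * (gaussPdf a * Real.exp (-(19/18))) ≤ δ * gaussPdf (a+δ) :=
        mul_le_mul_of_nonneg_left hpdf hδ0.le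
    _ = gaussPdf (a+δ) * (volume (Set.Ioc a (a+δ))).toReal := by
        rw [Real.volume_Ioc, ENNReal.toReal_ofReal (by linarith)]; ring
    _ ≤ ∫ t in Set.Ioc a (a+δ), gaussPdf t := by
        refine setIntegral_ge_of_const_le_real measurableSet_Ioc measure_Ioc_lt_top.ne
          (fun t ht => gaussPdf_antitone (by linarith [ht.1]) ht.2)
          integrable_gaussPdf.integrableOn
    _ ≤ ∫ t in Set.Ioc a (a+2*C), gaussPdf t := by
        refine setIntegral_mono_set integrable_gaussPdf.integrableOn
          (Filter.Eventually.of_forall fun t => (gaussPdf_pos t).le)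
          (HasSubset.Subset.eventuallyLE (Set.Ioc_subset_Ioc_right (by linarith)))

lemma denom_pos {C a : ℝ} (hC : 0 < C) (ha : 3 ≤ a) :
    0 < gaussCdf (a + 2*C) - gaussCdf a := by
  refine lt_of_lt_of_le ?_ (denom_lb hC ha)
  have ha0 : (0:ℝ) < a := by linarith
  have h1 : 0 < min (2*C) a⁻¹ := lt_min (by linarith) (by positivity)
  exact mul_pos h1 (mul_pos (gaussPdf_pos a) (Real.exp_pos _))

set_option maxHeartbeats 800000 in
lemma pointwise_bound {C a : ℝ} (hC : 0 < C) (ha : 3 ≤ a) :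
    (gaussPdf (a + 2*C) - gaussPdf a) ^ 2 / (gaussCdf (a + 2*C) - gaussCdf a)
      ≤ 1.12 * Real.exp (19/18) * (a * gaussPdf a) := by
  have ha0 : (0:ℝ) < a := by linarith
  set δ := min (2*C) a⁻¹ with hδdef
  have hδ0 : 0 < δ := lt_min (by linarith) (by positivity)
  have hD := denom_lb hC ha
  have hD0 : 0 < gaussCdf (a + 2*C) - gaussCdf a := denom_pos hC ha
  rw [div_le_iff₀ hD0]
  have hφ := gaussPdf_pos a
  have hmono : gaussPdf (a+2*C) ≤ gaussPdf a := gaussPdf_antitone (by linarith) (by linarith)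
  have hφb := gaussPdf_pos (a+2*C)
  have key : (gaussPdf (a + 2*C) - gaussPdf a) ^ 2 ≤ 1.12 * (a * δ) * gaussPdf a ^ 2 := by
    rcases le_total a⁻¹ (2*C) with h | h
    · have hδ : δ = a⁻¹ := min_eq_right h
      have haδ : a * δ = 1 := by rw [hδ]; exact mul_inv_cancel₀ ha0.ne'
      rw [haδ]
      have hsq : (gaussPdf (a + 2*C) - gaussPdf a)^2 ≤ gaussPdf a ^ 2 := by
        rw [show (gaussPdf (a+2*C) - gaussPdf a)^2 = (gaussPdf a - gaussPdf (a+2*C))^2 by ring]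
        exact sq_le_sq' (by linarith) (by linarith)
      have h0 : 0 ≤ gaussPdf a ^ 2 := sq_nonneg _
      linarith
    · have hδ : δ = 2*C := min_eq_left h
      have hca : 2*C*a ≤ 1 := by
        calc 2*C*a ≤ a⁻¹*a := by nlinarith
        _ = 1 := inv_mul_cancel₀ ha0.ne'
      have hC6 : C ≤ 1/6 := by nlinarith
      have hb : gaussPdf (a+2*C) = gaussPdf a * Real.exp (-(a*(2*C) + (2*C)^2/2)) :=
        gaussPdf_add a (2*C)
      have hexp2 : 1 - (a*(2*C)+(2*C)^2/2) ≤ Real.exp (-(a*(2*C)+(2*C)^2/2)) := by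
        have := Real.add_one_le_exp (-(a*(2*C)+(2*C)^2/2)); linarith
      have hsub : gaussPdf a - gaussPdf (a+2*C) ≤ gaussPdf a * (2*a*C + 2*C^2) := by
        rw [hb]; nlinarith
      have hsub0 : 0 ≤ gaussPdf a - gaussPdf (a+2*C) := by linarith
      have hsq : (gaussPdf a - gaussPdf (a+2*C))^2 ≤ (gaussPdf a * (2*a*C + 2*C^2))^2 := by
        apply sq_le_sq' (by nlinarith) hsub
      have harith : (2*a*C + 2*C^2)^2 ≤ 1.12 * (a * (2*C)) := by
        have p1 : 0 ≤ 2*C*a*(1 - 2*C*a) := mul_nonneg (by positivity) (by linarith)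
        have p2 : 0 ≤ C^2*(1 - 2*C*a) := mul_nonneg (by positivity) (by linarith)
        have p3 : 0 ≤ C*(1/6 - C) := mul_nonneg hC.le (by linarith)
        have p4 : 0 ≤ C*(a - 3) := mul_nonneg hC.le (by linarith)
        have p5 : 0 ≤ C^2*(1/6 - C) := mul_nonneg (by positivity) (by linarith)
        have p6 : 0 ≤ C^3*(1/6 - C) := mul_nonneg (by positivity) (by linarith)
        nlinarith [p1, p2, p3, p4, p5, p6, mul_nonneg hC.le ha0.le]
      rw [hδ]
      calc (gaussPdf (a + 2*C) - gaussPdf a) ^ 2 = (gaussPdf a - gaussPdf (a+2*C))^2 := by ring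
        _ ≤ (gaussPdf a * (2*a*C + 2*C^2))^2 := hsq
        _ = (2*a*C + 2*C^2)^2 * gaussPdf a ^2 := by ring
        _ ≤ (1.12 * (a * (2*C))) * gaussPdf a ^2 :=
            mul_le_mul_of_nonneg_right harith (sq_nonneg _)
        _ = 1.12 * (a * (2*C)) * gaussPdf a ^ 2 := by ring
  have hexp1 : Real.exp (19/18) * Real.exp (-(19/18)) = 1 := by
    rw [← Real.exp_add]; norm_num
  have hT : 0 ≤ 1.12 * Real.exp (19/18) * (a * gaussPdf a) := by positivity
  calc (gaussPdf (a + 2*C) - gaussPdf a) ^ 2 ≤ 1.12 * (a * δ) * gaussPdf a ^ 2 := key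
    _ = 1.12 * Real.exp (19/18) * (a * gaussPdf a) * (δ * (gaussPdf a * Real.exp (-(19/18)))) := by
        rw [show (1.12 : ℝ) * (a * δ) * gaussPdf a ^ 2 =
          1.12 * (Real.exp (19/18) * Real.exp (-(19/18))) * (a * δ) * gaussPdf a ^ 2 by
            rw [hexp1]; ring]
        ring
    _ ≤ 1.12 * Real.exp (19/18) * (a * gaussPdf a) * (gaussCdf (a + 2*C) - gaussCdf a) :=
        mul_le_mul_of_nonneg_left hD hT

lemma exp_19_18_le : Real.exp (19/18) ≤ 2.88 := by
  have h18 : Real.exp (1/18) ≤ 18/17 := by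
    have h := Real.add_one_le_exp (-(1/18:ℝ))
    rw [Real.exp_neg] at h
    have hp := Real.exp_pos (1/18:ℝ)
    have hinv : Real.exp (1/18) * (Real.exp (1/18))⁻¹ = 1 := mul_inv_cancel₀ hp.ne'
    nlinarith
  have heq : Real.exp (19/18) = Real.exp 1 * Real.exp (1/18) := by
    rw [← Real.exp_add]; norm_num
  rw [heq]
  nlinarith [Real.exp_one_lt_d9, Real.exp_pos 1, Real.exp_pos (1/18)]

lemma exp_9_2_ge : (89:ℝ) ≤ Real.exp (9/2) := by
  have hsq : Real.exp (1/2) * Real.exp (1/2) = Real.exp 1 := by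
    rw [← Real.exp_add]; norm_num
  have h12 : (1.6487:ℝ) ≤ Real.exp (1/2) := by
    nlinarith [Real.exp_one_gt_d9, Real.exp_pos (1/2)]
  have heq : Real.exp (9/2) = Real.exp (1/2) ^ 9 := by
    rw [← Real.exp_nat_mul]; norm_num
  rw [heq]
  calc (89:ℝ) ≤ 1.6487^9 := by norm_num
    _ ≤ Real.exp (1/2)^9 := pow_le_pow_left₀ (by norm_num) h12 9

lemma numeric_final : 1.12 * Real.exp (19/18) * gaussPdf 3 ≤ 0.02 := by
  have hsqrt : (2.5:ℝ) ≤ Real.sqrt (2*Real.pi) := by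
    have h625 : (2.5:ℝ) = Real.sqrt 6.25 := by
      rw [show (6.25:ℝ) = 2.5^2 by norm_num, Real.sqrt_sq (by norm_num)]
    rw [h625]
    exact Real.sqrt_le_sqrt (by nlinarith [Real.pi_gt_d6])
  have hinv : (Real.sqrt (2*Real.pi))⁻¹ ≤ 0.4 := by
    rw [show (0.4:ℝ) = 2.5⁻¹ by norm_num]
    exact inv_anti₀ (by norm_num) hsqrt
  have hexp2 : Real.exp (-(3^2 : ℝ)/2) ≤ 1/89 := by
    rw [show (-(3^2 : ℝ)/2) = -(9/2) by norm_num, Real.exp_neg,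
      show (1:ℝ)/89 = 89⁻¹ by norm_num]
    exact inv_anti₀ (by norm_num) exp_9_2_ge
  unfold gaussPdf
  have A : (Real.sqrt (2*Real.pi))⁻¹ * Real.exp (-(3^2 : ℝ)/2) ≤ 0.4 * (1/89) :=
    mul_le_mul hinv hexp2 (Real.exp_pos _).le (by norm_num)
  have B : Real.exp (19/18) * ((Real.sqrt (2*Real.pi))⁻¹ * Real.exp (-(3^2 : ℝ)/2))
      ≤ 2.88 * (0.4 * (1/89)) :=
    mul_le_mul exp_19_18_le A (by positivity) (by norm_num)
  calc 1.12 * Real.exp (19/18) * ((Real.sqrt (2*Real.pi))⁻¹ * Real.exp (-((3:ℝ)^2)/2))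
      = 1.12 * (Real.exp (19/18) * ((Real.sqrt (2*Real.pi))⁻¹ * Real.exp (-((3:ℝ)^2)/2))) := by
        ring
    _ ≤ 1.12 * (2.88 * (0.4 * (1/89))) := by linarith
    _ ≤ 0.02 := by norm_num

lemma hasDerivAt_G (C : ℝ) (y : ℝ) :
    HasDerivAt (fun x => -(1.12 * Real.exp (19/18) * gaussPdf (x - C)))
      (1.12 * Real.exp (19/18) * ((y - C) * gaussPdf (y - C))) y := by
  have h1 : HasDerivAt (fun x : ℝ => -((x - C)^2)/2) (-(y - C)) y := by
    have h := (((hasDerivAt_id y).sub_const C).pow 2).neg.div_const 2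
    refine h.congr_deriv ?_
    simp
    ring
  have h3 := h1.exp
  have h4 := h3.const_mul ((Real.sqrt (2*Real.pi))⁻¹)
  have h5 := h4.const_mul (1.12 * Real.exp (19/18))
  have h6 := h5.neg
  have hval : 1.12 * Real.exp (19/18) * ((y - C) * gaussPdf (y - C)) =
      -(1.12 * Real.exp (19/18) * ((Real.sqrt (2*Real.pi))⁻¹ *
        (Real.exp (-((y - C)^2)/2) * (-(y - C))))) := by
    unfold gaussPdf; ring
  rw [hval]
  exact h6

lemma tendsto_G (C : ℝ) :
    Filter.Tendsto (fun x => -(1.12 * Real.exp (19/18) * gaussPdf (x - C)))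
      Filter.atTop (nhds 0) := by
  have h0 : Filter.Tendsto (fun x : ℝ => x - C) Filter.atTop Filter.atTop :=
    Filter.tendsto_atTop_add_const_right _ (-C) Filter.tendsto_id
  have hsq : Filter.Tendsto (fun x : ℝ => (x - C)^2) Filter.atTop Filter.atTop :=
    (Filter.tendsto_pow_atTop two_ne_zero).comp h0
  have h1 : Filter.Tendsto (fun x : ℝ => -((x - C)^2)/2) Filter.atTop Filter.atBot := by
    have := (hsq.atTop_mul_const_of_neg (by norm_num : (-(1:ℝ)/2) < 0))
    refine this.congr fun x => by ring
  have h2 := Real.tendsto_exp_atBot.comp h1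
  have h3 := ((h2.const_mul ((Real.sqrt (2*Real.pi))⁻¹)).const_mul
    (1.12 * Real.exp (19/18))).neg
  have : -(1.12 * Real.exp (19/18) * ((Real.sqrt (2*Real.pi))⁻¹ * 0)) = 0 := by ring
  rw [this] at h3
  exact h3

/-- For every `C > 0`,
`∫_{C+3}^∞ (φ(x+C) − φ(x−C))² / (Φ(x+C) − Φ(x−C)) dx ≤ 0.02`. -/
theorem integral_gauss_ratio_tail_le (C : ℝ) (hC : 0 < C) :
    ∫ x in Set.Ioi (C + 3), (gaussPdf (x + C) - gaussPdf (x - C)) ^ 2 /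
      (gaussCdf (x + C) - gaussCdf (x - C)) ≤ 0.02 := by
  set K := 1.12 * Real.exp (19/18) with hK
  have hK0 : 0 < K := by positivity
  have hderiv : ∀ y ∈ Set.Ici (C+3), HasDerivAt (fun x => -(K * gaussPdf (x - C)))
      (K * ((y - C) * gaussPdf (y - C))) y := fun y _ => hasDerivAt_G C y
  have hpos : ∀ y ∈ Set.Ioi (C+3), 0 ≤ K * ((y - C) * gaussPdf (y - C)) := by
    intro y hy
    have : (0:ℝ) ≤ y - C := by simp only [Set.mem_Ioi] at hy; linarith
    exact mul_nonneg hK0.le (mul_nonneg this (gaussPdf_pos _).le)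
  have hInt : IntegrableOn (fun y => K * ((y - C) * gaussPdf (y - C)))
      (Set.Ioi (C+3)) volume :=
    integrableOn_Ioi_deriv_of_nonneg' hderiv hpos (tendsto_G C)
  have hval : ∫ y in Set.Ioi (C+3), K * ((y - C) * gaussPdf (y - C)) =
      0 - -(K * gaussPdf (C + 3 - C)) :=
    integral_Ioi_of_hasDerivAt_of_nonneg' hderiv hpos (tendsto_G C)
  have hrw : ∀ x : ℝ, C + 3 < x → x + C = (x - C) + 2*C := fun x _ => by ring
  have hmain : ∫ x in Set.Ioi (C + 3), (gaussPdf (x + C) - gaussPdf (x - C)) ^ 2 /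
      (gaussCdf (x + C) - gaussCdf (x - C)) ≤
      ∫ y in Set.Ioi (C+3), K * ((y - C) * gaussPdf (y - C)) := by
    refine integral_mono_of_nonneg ?_ hInt ?_
    · rw [Filter.EventuallyLE, ae_restrict_iff' measurableSet_Ioi]
      refine Filter.Eventually.of_forall fun x hx => ?_
      simp only [Set.mem_Ioi] at hx
      have ha : (3:ℝ) ≤ x - C := by linarith
      have hD := denom_pos hC ha
      rw [show x + C = (x - C) + 2*C by ring] at *
      positivity
    · rw [Filter.EventuallyLE, ae_restrict_iff' measurableSet_Ioi]
      refine Filter.Eventually.of_forall fun x hx => ?_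
      simp only [Set.mem_Ioi] at hx
      have ha : (3:ℝ) ≤ x - C := by linarith
      rw [show x + C = (x - C) + 2*C by ring]
      exact pointwise_bound hC ha
  refine hmain.trans ?_
  rw [hval]
  have : (0:ℝ) - -(K * gaussPdf (C + 3 - C)) = K * gaussPdf 3 := by
    rw [show C + 3 - C = 3 by ring]; ring
  rw [this, hK]
  exact numeric_final
end

section
/- Let d ≥ 8 be a natural number and let Ω = {±1}^d (equivalently, Fin d → Bool) with the Hamming distance H(ω, ω′) = #{i : ω_i ≠ ω′_i}. Then there exists a subset Ω′ ⊆ Ω such that (i) the cardinality of Ω′ is at least 2^{d/8} (as real numbers), and (ii) for all distinct ω, ω′ ∈ Ω′, H(ω, ω′) ≥ d/8. -/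
open Finset

variable {d : ℕ}

/-- The ball of radius `< m` around `c` has at most `∑_{k<m} C(d,k)` points. -/
lemma ball_card_le (m : ℕ) (c : Fin d → Bool) :
    ({x | hammingDist c x < m} : Finset (Fin d → Bool)).card
      ≤ ∑ k ∈ range m, d.choose k := by
  classical
  set f : Finset (Fin d) → (Fin d → Bool) := fun s i => if i ∈ s then !(c i) else c i with hf
  set T : Finset (Finset (Fin d)) := {s | s.card < m} with hT
  have hsub : ({x | hammingDist c x < m} : Finset (Fin d → Bool)) ⊆ T.image f := by
    intro x hx
    simp only [mem_filter, mem_univ, true_and] at hx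
    refine mem_image.2 ⟨({i | c i ≠ x i} : Finset (Fin d)), ?_, ?_⟩
    · simpa [hT, hammingDist] using hx
    · funext i
      cases hc : c i <;> cases hx' : x i <;> simp [hf, Finset.mem_filter, hc, hx']
  calc ({x | hammingDist c x < m} : Finset (Fin d → Bool)).card
      ≤ (T.image f).card := card_le_card hsub
    _ ≤ T.card := card_image_le
    _ ≤ ∑ k ∈ range m, d.choose k := by
        have : T ⊆ (range m).biUnion (fun k => powersetCard k univ) := by
          intro s hs
          simp only [hT, mem_filter, mem_univ, true_and] at hs
          exact mem_biUnion.2 ⟨s.card, mem_range.2 hs, by simp [mem_powersetCard]⟩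
        calc T.card ≤ ((range m).biUnion (fun k => powersetCard k univ)).card :=
              card_le_card this
          _ ≤ ∑ k ∈ range m, (powersetCard k (univ : Finset (Fin d))).card :=
              card_biUnion_le
          _ = ∑ k ∈ range m, d.choose k := by simp [card_powersetCard]

/-- Key numeric bound: `∑_{k<m} C(d,k) · 7^(d-m+1) ≤ 8^d` when `m ≤ d+1`. -/
lemma sum_choose_bound (m : ℕ) (hmd : m ≤ d + 1) :
    (∑ k ∈ range m, d.choose k) * 7 ^ (d + 1 - m) ≤ 8 ^ d := by
  have h8 : (8:ℕ) ^ d = ∑ k ∈ range (d+1), 1 ^ k * 7 ^ (d - k) * d.choose k := by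
    have := add_pow (1:ℕ) 7 d
    norm_num at this ⊢
    convert this using 1
  calc (∑ k ∈ range m, d.choose k) * 7 ^ (d + 1 - m)
      = ∑ k ∈ range m, d.choose k * 7 ^ (d + 1 - m) := by rw [sum_mul]
    _ ≤ ∑ k ∈ range m, 1 ^ k * 7 ^ (d - k) * d.choose k := by
        refine sum_le_sum fun k hk => ?_
        have hk' := mem_range.1 hk
        have hle : d + 1 - m ≤ d - k := by omega
        have h7 : (7:ℕ) ^ (d + 1 - m) ≤ 7 ^ (d - k) :=
          Nat.pow_le_pow_right (by norm_num) hle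
        calc d.choose k * 7 ^ (d + 1 - m) ≤ d.choose k * 7 ^ (d - k) :=
              Nat.mul_le_mul_left _ h7
          _ = 1 ^ k * 7 ^ (d - k) * d.choose k := by ring
    _ ≤ ∑ k ∈ range (d+1), 1 ^ k * 7 ^ (d - k) * d.choose k :=
        sum_le_sum_of_subset (range_subset_range.2 hmd)
    _ = 8 ^ d := h8.symm

/-- Gilbert–Varshamov: For `d ≥ 8` there is a subset `Ω'` of the
hypercube `Fin d → Bool` of cardinality at least `2^(d/8)` in which any two distinct
points are at Hamming distance at least `d/8`. -/
theorem gilbert_varshamov (d : ℕ) (hd : 8 ≤ d) :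
    ∃ Ω' : Finset (Fin d → Bool),
      (2 : ℝ) ^ ((d : ℝ) / 8) ≤ (Ω'.card : ℝ) ∧
      ∀ ω ∈ Ω', ∀ ω' ∈ Ω', ω ≠ ω' → (d : ℝ) / 8 ≤ (hammingDist ω ω' : ℝ) := by
  classical
  set m : ℕ := (d + 7) / 8 with hmdef
  have hm1 : 1 ≤ m := by omega
  have hmd : m ≤ d + 1 := by omega
  set P : Finset (Fin d → Bool) → Prop :=
    fun C => ∀ ω ∈ C, ∀ ω' ∈ C, ω ≠ ω' → m ≤ hammingDist ω ω' with hPdef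
  obtain ⟨Ω', hΩ'mem, hmax⟩ :=
    Finset.exists_max_image (Finset.univ.filter P) Finset.card
      ⟨∅, Finset.mem_filter.2 ⟨Finset.mem_univ _, by simp [hPdef]⟩⟩
  have hP : P Ω' := (Finset.mem_filter.1 hΩ'mem).2
  -- covering by balls of radius < m
  have hcov : ∀ x : Fin d → Bool, ∃ c ∈ Ω', hammingDist c x < m := by
    intro x
    by_contra hcon
    push_neg at hcon
    have hx : x ∉ Ω' := by
      intro hx
      have := hcon x hx
      simp [hammingDist_self] at this
      omega
    have hPi : P (insert x Ω') := by
      intro a ha b hb hab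
      rcases Finset.mem_insert.1 ha with ha' | ha'
      · rcases Finset.mem_insert.1 hb with hb' | hb'
        · exact absurd (ha'.trans hb'.symm) hab
        · subst ha'; rw [hammingDist_comm]; exact hcon b hb'
      · rcases Finset.mem_insert.1 hb with hb' | hb'
        · subst hb'; exact hcon a ha'
        · exact hP a ha' b hb' hab
    have := hmax (insert x Ω') (Finset.mem_filter.2 ⟨Finset.mem_univ _, hPi⟩)
    rw [Finset.card_insert_of_notMem hx] at this
    omega
  have hcount : 2 ^ d ≤ Ω'.card * ∑ k ∈ range m, d.choose k := by
    have hsub : (univ : Finset (Fin d → Bool)) ⊆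
        Ω'.biUnion (fun c => ({x | hammingDist c x < m} : Finset (Fin d → Bool))) := by
      intro x _
      obtain ⟨c, hc, hlt⟩ := hcov x
      exact Finset.mem_biUnion.2 ⟨c, hc, by simp [hlt]⟩
    calc 2 ^ d = (univ : Finset (Fin d → Bool)).card := by simp
      _ ≤ (Ω'.biUnion (fun c => ({x | hammingDist c x < m} : Finset (Fin d → Bool)))).card :=
          Finset.card_le_card hsub
      _ ≤ ∑ c ∈ Ω', ({x | hammingDist c x < m} : Finset (Fin d → Bool)).card :=
          Finset.card_biUnion_le
      _ ≤ ∑ _c ∈ Ω', ∑ k ∈ range m, d.choose k :=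
          Finset.sum_le_sum fun c _ => ball_card_le m c
      _ = Ω'.card * ∑ k ∈ range m, d.choose k := by rw [Finset.sum_const, smul_eq_mul]
  refine ⟨Ω', ?_, ?_⟩
  · -- cardinality bound
    set V : ℕ := ∑ k ∈ range m, d.choose k with hVdef
    set e : ℕ := d + 1 - m with hedef
    have hVb : V * 7 ^ e ≤ 8 ^ d := sum_choose_bound m hmd
    have hV1 : 1 ≤ V := by
      calc 1 = d.choose 0 := (Nat.choose_zero_right d).symm
        _ ≤ V := Finset.single_le_sum (f := fun k => d.choose k)
            (fun _ _ => Nat.zero_le _) (Finset.mem_range.2 hm1)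
    set t : ℝ := (d : ℝ) / 8 with htdef
    have ht : 0 ≤ t := by positivity
    have hd8 : (d : ℝ) = 8 * t := by rw [htdef]; ring
    have h7e : 7 * t ≤ (e : ℝ) := by
      have h1 : 7 * d + 1 ≤ 8 * e := by omega
      have h2 : (7 * d + 1 : ℝ) ≤ 8 * e := by exact_mod_cast h1
      rw [htdef]; nlinarith
    -- key real inequality
    have main : (2 : ℝ) ^ t * 8 ^ d ≤ 2 ^ d * 7 ^ e := by
      rw [← Real.rpow_natCast 2 d, ← Real.rpow_natCast 7 e, ← Real.rpow_natCast 8 d]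
      calc (2 : ℝ) ^ t * 8 ^ (d : ℝ)
          = 2 ^ t * (8 : ℝ) ^ ((8 : ℝ) * t) := by rw [← hd8]
        _ = 2 ^ t * ((8 : ℝ) ^ (8 : ℝ)) ^ t := by rw [Real.rpow_mul (by norm_num)]
        _ = 2 ^ t * (16777216 : ℝ) ^ t := by
            norm_num [show ((8 : ℝ) ^ (8 : ℝ)) = 16777216 by
              rw [show (8 : ℝ) = ((8 : ℕ) : ℝ) by norm_num, Real.rpow_natCast]; norm_num]
        _ = (33554432 : ℝ) ^ t := by
            rw [← Real.mul_rpow (by norm_num) (by norm_num)]; norm_num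
        _ ≤ (210827008 : ℝ) ^ t := Real.rpow_le_rpow (by norm_num) (by norm_num) ht
        _ = (256 : ℝ) ^ t * (823543 : ℝ) ^ t := by
            rw [← Real.mul_rpow (by norm_num) (by norm_num)]; norm_num
        _ = 2 ^ ((8 : ℝ) * t) * 7 ^ ((7 : ℝ) * t) := by
            rw [Real.rpow_mul (by norm_num : (0:ℝ) ≤ 2), Real.rpow_mul (by norm_num : (0:ℝ) ≤ 7)]
            norm_num [show ((2 : ℝ) ^ (8 : ℝ)) = 256 by
                rw [show (8 : ℝ) = ((8 : ℕ) : ℝ) by norm_num, Real.rpow_natCast]; norm_num,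
              show ((7 : ℝ) ^ (7 : ℝ)) = 823543 by
                rw [show (7 : ℝ) = ((7 : ℕ) : ℝ) by norm_num, Real.rpow_natCast]; norm_num]
        _ ≤ 2 ^ (d : ℝ) * 7 ^ (e : ℝ) := by
            rw [← hd8]
            exact mul_le_mul_of_nonneg_left
              (Real.rpow_le_rpow_of_exponent_le (by norm_num) h7e)
              (le_of_lt (Real.rpow_pos_of_pos (by norm_num) _))
    -- assemble
    have hVpos : (0 : ℝ) < V := by exact_mod_cast hV1
    have h7pos : (0 : ℝ) < 7 ^ e := by positivity
    have hB : (V : ℝ) * 7 ^ e ≤ 8 ^ d := by exact_mod_cast hVb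
    have hN : (2 : ℝ) ^ d ≤ (Ω'.card : ℝ) * V := by exact_mod_cast hcount
    have hstep : (2 : ℝ) ^ t * V ≤ 2 ^ d := by
      have h1 : ((2 : ℝ) ^ t * V) * 7 ^ e ≤ 2 ^ t * 8 ^ d := by
        have := mul_le_mul_of_nonneg_left hB (le_of_lt (Real.rpow_pos_of_pos two_pos t))
        nlinarith
      have h2 : ((2 : ℝ) ^ t * V) * 7 ^ e ≤ (2 ^ d) * 7 ^ e := h1.trans main
      exact le_of_mul_le_mul_right h2 h7pos
    have := hstep.trans hN
    exact (mul_le_mul_iff_of_pos_right hVpos).1 this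
  · -- distance bound
    intro ω hω ω' hω' hne
    have h := hP ω hω ω' hω' hne
    have h8m : (d : ℝ) / 8 ≤ m := by
      rw [div_le_iff₀ (by norm_num)]
      have : d ≤ m * 8 := by omega
      exact_mod_cast this
    exact h8m.trans (by exact_mod_cast h)
end

section
/- (Multi-source-target reduction to testing.) Let D be a measurable space, N ≥ 1, and let S_1, …, S_N be probability measures on D. Let H be a type (a hypothesis class), let L_1, …, L_N : H → ℝ be excess-loss functionals, and let δ > 0. Assume the target-δ-separation condition: for all j ≠ k and all h ∈ H, if L_j(h) ≤ δ then L_k(h) ≥ δ. Then for every map ĥ : D → H such that d ↦ L_j(ĥ(d)) is measurable for each j, one has max_{j ∈ [N]} S_j({d : L_j(ĥ(d)) ≥ δ}) ≥ inf_{ψ} max_{j ∈ [N]} S_j({d : ψ(d) ≠ j}), where the infimum is over all measurable tests ψ : D → Fin N. -/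
open MeasureTheory ENNReal

/-- Multi-source-target reduction to testing: if the excess-loss
functionals `L 1, …, L N` are target-`δ`-separated, then for every estimator
`ĥ : D → H` (with measurable composed losses), the maximal probability of incurring
excess loss at least `δ` is at least the minimax testing error. -/
theorem reduction_to_testing
    {D : Type*} [MeasurableSpace D] (N : ℕ) (hN : 1 ≤ N)
    (S : Fin N → Measure D) (hS : ∀ j, IsProbabilityMeasure (S j))
    {H : Type*} (L : Fin N → H → ℝ) (δ : ℝ) (hδ : 0 < δ)
    (hsep : ∀ j k, j ≠ k → ∀ h : H, L j h ≤ δ → δ ≤ L k h)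
    (hhat : D → H) (hmeas : ∀ j, Measurable fun d => L j (hhat d)) :
    (⨅ ψ : {ψ : D → Fin N // Measurable ψ}, ⨆ j, S j {d | ψ.1 d ≠ j}) ≤
      ⨆ j, S j {d | δ ≤ L j (hhat d)} := by
  classical
  set i0 : Fin N := ⟨0, hN⟩ with hi0
  set g : (Fin N → Bool) → Fin N :=
    fun b => (Fin.find? (fun j => b j)).getD i0 with hg
  set F : D → (Fin N → Bool) := fun d j => decide (L j (hhat d) < δ) with hF
  have hFmeas : Measurable F := by
    apply measurable_pi_lambda
    intro j
    have : Measurable fun d => L j (hhat d) < δ := by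
      have h1 : MeasurableSet {d | L j (hhat d) < δ} :=
        measurableSet_lt (hmeas j) measurable_const
      exact measurable_to_prop (by simpa using h1)
    exact (measurable_of_countable (fun p : Prop => decide p)).comp this
  have hψmeas : Measurable (fun d => g (F d)) :=
    (measurable_of_countable g).comp hFmeas
  refine le_trans (iInf_le _ ⟨fun d => g (F d), hψmeas⟩) ?_
  refine iSup_mono fun j => measure_mono fun d hd => ?_
  simp only [Set.mem_setOf_eq] at hd ⊢
  rcases h : Fin.find? (fun k => F d k) with _ | k
  · rw [Fin.find?_eq_none_iff] at h
    have := h j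
    simp only [hF, decide_eq_false_iff_not] at this
    linarith [not_lt.mp this]
  · have hspec := (Fin.find?_eq_some_iff.mp h).1
    simp only [hF, decide_eq_true_eq] at hspec
    have hkj : k ≠ j := by
      intro hkj
      apply hd
      simp [hg, h, hkj]
    exact hsep k j hkj _ hspec.le
end

section
/- (Fano's method for testing.) Let N ≥ 2 and let S_1, …, S_N be probability measures on a measurable space D such that KL(S_j ‖ S_k) < ∞ for all j, k. Then for every measurable test ψ : D → Fin N, max_{j ∈ [N]} S_j({d : ψ(d) ≠ j}) ≥ 1 − ( (1/N²) ∑_{j=1}^N ∑_{k=1}^N KL(S_j ‖ S_k) + log 2 ) / log N. In particular, if N ≥ 4 and KL(S_j ‖ S_k) ≤ (log N)/4 for all j, k, then max_{j} S_j({d : ψ(d) ≠ j}) ≥ 1/4. -/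
open MeasureTheory ENNReal

open Classical in
/-- The Kullback–Leibler divergence between two measures, valued in `[0, ∞]`:
`∫ log(dμ/dν) dμ` if `μ ≪ ν` and the integrand is `μ`-integrable, and `∞` otherwise. -/
noncomputable def KLdiv {Ω : Type*} [MeasurableSpace Ω] (μ ν : Measure Ω) : ℝ≥0∞ :=
  if μ ≪ ν ∧ Integrable (fun x => Real.log (μ.rnDeriv ν x).toReal) μ
  then ENNReal.ofReal (∫ x, Real.log (μ.rnDeriv ν x).toReal ∂μ)
  else ∞

section Helpers

/-- tangent-line bound: `x * log x ≥ x * log m + x - m` for `x ≥ 0`, `m > 0`. -/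
lemma mul_log_tangent {x m : ℝ} (hx : 0 ≤ x) (hm : 0 < m) :
    x * Real.log m + x - m ≤ x * Real.log x := by
  rcases hx.eq_or_lt with h | hx
  · simp [← h, hm.le]
  · have h1 : 1 - (x / m)⁻¹ ≤ Real.log (x / m) := Real.one_sub_inv_le_log_of_pos (by positivity)
    have h2 : Real.log (x / m) = Real.log x - Real.log m := Real.log_div hx.ne' hm.ne'
    have h3 : (x / m)⁻¹ = m / x := by field_simp
    rw [h2, h3] at h1
    have h4 : x * (1 - m / x) ≤ x * (Real.log x - Real.log m) :=
      mul_le_mul_of_nonneg_left h1 hx.le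
    have h5 : x * (1 - m / x) = x - m := by field_simp
    nlinarith [h4, h5]

/-- log-sum inequality with `∑ q = 1`. -/
lemma logsum_ineq {ι : Type*} (s : Finset ι) (p q : ι → ℝ) (hp : ∀ i ∈ s, 0 ≤ p i)
    (hq : ∀ i ∈ s, 0 ≤ q i) (hqp : ∀ i ∈ s, q i = 0 → p i = 0) (hq1 : ∑ i ∈ s, q i = 1) :
    (∑ i ∈ s, p i) * Real.log (∑ i ∈ s, p i) ≤ ∑ i ∈ s, p i * Real.log (p i / q i) := by
  set P := ∑ i ∈ s, p i with hP
  have hPnn : 0 ≤ P := Finset.sum_nonneg hp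
  rcases hPnn.eq_or_lt with h | hPpos
  · have : ∀ i ∈ s, p i = 0 := by
      intro i hi
      have := (Finset.sum_eq_zero_iff_of_nonneg hp).mp h.symm i hi
      exact this
    rw [← h]
    simp only [zero_mul]
    refine Finset.sum_nonneg fun i hi => by rw [this i hi]; simp
  · have key : ∀ i ∈ s, p i * Real.log P + (p i - q i * P) ≤ p i * Real.log (p i / q i) := by
      intro i hi
      rcases (hp i hi).eq_or_lt with h0 | hpi
      · have hnn := mul_nonneg (hq i hi) hPnn
        rw [← h0]; simp only [zero_mul, zero_add, zero_sub, zero_div]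
        simpa using hnn
      · have hqi : 0 < q i := by
          rcases (hq i hi).eq_or_lt with h0 | h; · exact absurd (hqp i hi h0.symm) hpi.ne'
          · exact h
        have hx : 0 < p i / (q i * P) := by positivity
        have h1 : 1 - (p i / (q i * P))⁻¹ ≤ Real.log (p i / (q i * P)) :=
          Real.one_sub_inv_le_log_of_pos hx
        have h2 : Real.log (p i / (q i * P)) = Real.log (p i / q i) - Real.log P := by
          rw [Real.log_div hpi.ne' (by positivity), Real.log_div hpi.ne' hqi.ne',
            Real.log_mul hqi.ne' hPpos.ne']
          ring
        have h3 : (p i / (q i * P))⁻¹ = q i * P / p i := by field_simp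
        rw [h2, h3] at h1
        have h4 := mul_le_mul_of_nonneg_left h1 (hp i hi)
        have h5 : p i * (1 - q i * P / p i) = p i - q i * P := by field_simp
        nlinarith [h4, h5]
    calc P * Real.log P = ∑ i ∈ s, (p i * Real.log P + (p i - q i * P)) := by
          rw [Finset.sum_add_distrib, ← Finset.sum_mul, Finset.sum_sub_distrib,
            ← Finset.sum_mul, hq1, ← hP]
          ring
      _ ≤ _ := Finset.sum_le_sum key

/-- Jensen for `x log x` with uniform weights. -/
lemma sum_mul_log_ge {ι : Type*} (s : Finset ι) (x : ι → ℝ) (hx : ∀ i ∈ s, 0 ≤ x i) :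
    (∑ i ∈ s, x i) * Real.log ((∑ i ∈ s, x i) / s.card) ≤ ∑ i ∈ s, x i * Real.log (x i) := by
  rcases (Finset.sum_nonneg hx).eq_or_lt with h | hMpos
  · rw [← h]
    simp only [zero_mul]
    refine Finset.sum_nonneg fun i hi => ?_
    have := (Finset.sum_eq_zero_iff_of_nonneg hx).mp h.symm i hi
    rw [this]; simp
  · have hcard : 0 < (s.card : ℝ) := by
      rcases Finset.eq_empty_or_nonempty s with rfl | h
      · simp at hMpos
      · exact_mod_cast Finset.card_pos.mpr h
    set M := ∑ i ∈ s, x i with hM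
    have hm : 0 < M / s.card := by positivity
    have key : ∀ i ∈ s, x i * Real.log (M / s.card) + x i - M / s.card ≤ x i * Real.log (x i) :=
      fun i hi => mul_log_tangent (hx i hi) hm
    have hsum : ∑ i ∈ s, (x i * Real.log (M / s.card) + x i - M / s.card)
        = M * Real.log (M / s.card) := by
      rw [Finset.sum_sub_distrib, Finset.sum_add_distrib, ← Finset.sum_mul, Finset.sum_const,
        nsmul_eq_mul]
      rw [← hM]
      field_simp
      ring
    calc M * Real.log (M / s.card) = _ := hsum.symm
      _ ≤ _ := Finset.sum_le_sum key

/-- binary entropy bounded by `log 2`. -/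
lemma binent_ge {p : ℝ} (h0 : 0 ≤ p) (h1 : p ≤ 1) :
    -Real.log 2 ≤ p * Real.log p + (1 - p) * Real.log (1 - p) := by
  have key : ∀ q : ℝ, 0 ≤ q → q ≤ 1 → q - 1/2 ≤ q * Real.log 2 + q * Real.log q := by
    intro q hq hq1
    rcases hq.eq_or_lt with h | hq
    · rw [← h]; simp
    · have ha : 1 - (2*q)⁻¹ ≤ Real.log (2*q) := Real.one_sub_inv_le_log_of_pos (by positivity)
      have hb : Real.log (2 * q) = Real.log 2 + Real.log q := Real.log_mul two_ne_zero hq.ne'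
      rw [hb] at ha
      have hc := mul_le_mul_of_nonneg_left ha hq.le
      have hd : q * (1 - (2*q)⁻¹) = q - 1/2 := by field_simp
      nlinarith [hc, hd]
  have k1 := key p h0 h1
  have k2 := key (1 - p) (by linarith) (by linarith)
  nlinarith [k1, k2]

lemma mul_log_div_ge {x y : ℝ} (hx : 0 ≤ x) (hy0 : 0 ≤ y) (hy1 : y ≤ 1) (h : y = 0 → x = 0) :
    x * Real.log x ≤ x * Real.log (x / y) := by
  rcases hx.eq_or_lt with h0 | hxpos
  · simp [← h0]
  · have hy : 0 < y := by
      rcases hy0.eq_or_lt with h0 | h0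
      · exact absurd (h h0.symm) hxpos.ne'
      · exact h0
    rw [Real.log_div hxpos.ne' hy.ne']
    have : Real.log y ≤ 0 := Real.log_nonpos hy0 hy1
    nlinarith

lemma sum_log_le {ι : Type*} (s : Finset ι) (hs : s.Nonempty) (t : ι → ℝ)
    (ht : ∀ i ∈ s, 0 < t i) :
    ∑ i ∈ s, Real.log (t i) ≤ s.card * Real.log ((∑ i ∈ s, t i) / s.card) := by
  have hcard : 0 < (s.card : ℝ) := by exact_mod_cast Finset.card_pos.mpr hs
  set M := ∑ i ∈ s, t i with hM
  have hMpos : 0 < M := Finset.sum_pos ht hs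
  have hm : 0 < M / s.card := by positivity
  have key : ∀ i ∈ s, Real.log (t i) ≤ Real.log (M / s.card) + t i / (M / s.card) - 1 := by
    intro i hi
    have h1 : Real.log (t i / (M / s.card)) ≤ t i / (M / s.card) - 1 :=
      Real.log_le_sub_one_of_pos (div_pos (ht i hi) hm)
    rw [Real.log_div (ht i hi).ne' hm.ne'] at h1
    linarith
  calc ∑ i ∈ s, Real.log (t i) ≤ ∑ i ∈ s, (Real.log (M / s.card) + t i / (M / s.card) - 1) :=
        Finset.sum_le_sum key
    _ = s.card * Real.log (M / s.card) := by
        rw [Finset.sum_sub_distrib, Finset.sum_add_distrib, Finset.sum_const, Finset.sum_const,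
          ← Finset.sum_div, ← hM]
        field_simp
        simp only [nsmul_eq_mul]; ring

lemma abs_log_sum_le {ι : Type*} (s : Finset ι) (hs : s.Nonempty) (t : ι → ℝ)
    (ht : ∀ i ∈ s, 0 < t i) :
    |Real.log (∑ i ∈ s, t i)| ≤ Real.log s.card + ∑ i ∈ s, |Real.log (t i)| := by
  have hcard : (1 : ℝ) ≤ s.card := by exact_mod_cast Finset.card_pos.mpr hs
  have hlogc : 0 ≤ Real.log s.card := Real.log_nonneg hcard
  have habs_nonneg : 0 ≤ ∑ i ∈ s, |Real.log (t i)| :=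
    Finset.sum_nonneg fun i _ => abs_nonneg _
  rw [abs_le]
  obtain ⟨k, hk, hkmax⟩ := s.exists_max_image t hs
  obtain ⟨k0, hk0⟩ := hs.exists_mem
  constructor
  · have h1 : t k0 ≤ ∑ i ∈ s, t i :=
      Finset.single_le_sum (fun i hi => (ht i hi).le) hk0
    have h2 : Real.log (t k0) ≤ Real.log (∑ i ∈ s, t i) :=
      Real.log_le_log (ht k0 hk0) h1
    have h3 : -|Real.log (t k0)| ≤ Real.log (t k0) := neg_abs_le _
    have h4 : |Real.log (t k0)| ≤ ∑ i ∈ s, |Real.log (t i)| :=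
      Finset.single_le_sum (f := fun i => |Real.log (t i)|) (fun i _ => abs_nonneg _) hk0
    linarith
  · have h1 : ∑ i ∈ s, t i ≤ s.card * t k := by
      have := Finset.sum_le_card_nsmul s t (t k) fun i hi => hkmax i hi
      simpa [nsmul_eq_mul] using this
    have htk : 0 < t k := ht k hk
    have h2 : Real.log (∑ i ∈ s, t i) ≤ Real.log (s.card * t k) :=
      Real.log_le_log (Finset.sum_pos ht hs) h1
    have h3 : Real.log ((s.card : ℝ) * t k) = Real.log s.card + Real.log (t k) := by
      rw [Real.log_mul (by positivity) htk.ne']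
    have h4 : Real.log (t k) ≤ |Real.log (t k)| := le_abs_self _
    have h5 : |Real.log (t k)| ≤ ∑ i ∈ s, |Real.log (t i)| :=
      Finset.single_le_sum (f := fun i => |Real.log (t i)|) (fun i _ => abs_nonneg _) hk
    linarith

/-- Jensen-type lower bound for the set integral of a log-likelihood ratio. -/
lemma setIntegral_llr_ge {α : Type*} [MeasurableSpace α] {μ ν : Measure α}
    [IsFiniteMeasure μ] [IsFiniteMeasure ν]
    (hμν : μ ≪ ν) (hνμ : ν ≪ μ) (hint : Integrable (llr μ ν) μ)
    {A : Set α} (hA : MeasurableSet A) :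
    (μ A).toReal * Real.log ((μ A).toReal / (ν A).toReal) ≤ ∫ x in A, llr μ ν x ∂μ := by
  by_cases h0 : μ A = 0
  · simp [h0, Measure.restrict_eq_zero.mpr h0]
  · have hν0 : ν A ≠ 0 := fun h => h0 (hμν h)
    set a := (μ A).toReal with ha_def
    set b := (ν A).toReal with hb_def
    have ha : 0 < a := ENNReal.toReal_pos h0 (measure_ne_top _ _)
    have hb : 0 < b := ENNReal.toReal_pos hν0 (measure_ne_top _ _)
    have hr_int : Integrable (fun x => (ν.rnDeriv μ x).toReal) μ :=
      Measure.integrable_toReal_rnDeriv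
    have hset : ∫ x in A, (ν.rnDeriv μ x).toReal ∂μ = b :=
      Measure.setIntegral_toReal_rnDeriv hνμ A
    have hae : ∀ᵐ x ∂μ,
        1 - Real.log (b / a) - (ν.rnDeriv μ x).toReal * (a / b) ≤ llr μ ν x := by
      filter_upwards [Measure.rnDeriv_pos' hμν, Measure.rnDeriv_lt_top ν μ,
        (neg_llr hμν).symm] with x hpos hlt hneg
      have hr : 0 < (ν.rnDeriv μ x).toReal := ENNReal.toReal_pos hpos.ne' hlt.ne
      set r := (ν.rnDeriv μ x).toReal
      have h1 : Real.log (r * (a / b)) ≤ r * (a / b) - 1 :=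
        Real.log_le_sub_one_of_pos (by positivity)
      have h2 : Real.log (r * (a / b)) = Real.log r + Real.log a - Real.log b := by
        rw [Real.log_mul hr.ne' (by positivity), Real.log_div ha.ne' hb.ne']; ring
      have h3 : Real.log (b / a) = Real.log b - Real.log a := Real.log_div hb.ne' ha.ne'
      have h4 : llr μ ν x = -Real.log r := by
        have : llr ν μ x = Real.log r := rfl
        have h5 := hneg
        simp only [Pi.neg_apply] at h5
        rw [this] at h5
        linarith [h5]
      rw [h4, h3]
      linarith [h1, h2]
    have hintL : Integrable
        (fun x => 1 - Real.log (b / a) - (ν.rnDeriv μ x).toReal * (a / b)) μ :=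
      (integrable_const _).sub (hr_int.mul_const _)
    have hmono : ∫ x in A, (1 - Real.log (b / a) - (ν.rnDeriv μ x).toReal * (a / b)) ∂μ
        ≤ ∫ x in A, llr μ ν x ∂μ :=
      integral_mono_ae hintL.restrict hint.restrict (ae_restrict_of_ae hae)
    have hcalc : ∫ x in A, (1 - Real.log (b / a) - (ν.rnDeriv μ x).toReal * (a / b)) ∂μ
        = (1 - Real.log (b / a)) * a - (a / b) * b := by
      rw [integral_sub (integrable_const _).restrict (hr_int.mul_const _).restrict,
        setIntegral_const, integral_mul_const, hset]
      simp [mul_comm, measureReal_def, ha_def]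
    have : a * Real.log (a / b) = (1 - Real.log (b / a)) * a - (a / b) * b := by
      rw [Real.log_div ha.ne' hb.ne', Real.log_div hb.ne' ha.ne']
      field_simp
      ring
    rw [this, ← hcalc]
    exact hmono

lemma withDensity_finsum {α ι : Type*} [MeasurableSpace α] (μ : Measure α) (s : Finset ι)
    (f : ι → α → ℝ≥0∞) (hf : ∀ i, Measurable (f i)) :
    μ.withDensity (fun x => ∑ i ∈ s, f i x) = ∑ i ∈ s, μ.withDensity (f i) := by
  classical
  induction s using Finset.cons_induction with
  | empty => simp
  | cons i s hi ih =>
      rw [Finset.sum_cons]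
      rw [← ih]
      have : (fun x => ∑ j ∈ Finset.cons i s hi, f j x) = f i + fun x => ∑ j ∈ s, f j x := by
        funext x; simp only [Finset.sum_cons, Pi.add_apply]
      rw [this, withDensity_add_left (hf i)]

/-- Key estimate: the llr against the uniform mixture is integrable and its integral is
at most the average of the llr's against the components. -/
lemma mixture_llr {α : Type*} [MeasurableSpace α] {N : ℕ} (hN : 0 < N)
    (S : Fin N → Measure α) [hPr : ∀ k, IsProbabilityMeasure (S k)]
    (hac : ∀ j k, S j ≪ S k) (j : Fin N)
    (hint : ∀ k, Integrable (llr (S j) (S k)) (S j)) :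
    Integrable (llr (S j) ((N : ℝ≥0∞)⁻¹ • ∑ k, S k)) (S j) ∧
      ∫ x, llr (S j) ((N : ℝ≥0∞)⁻¹ • ∑ k, S k) x ∂(S j)
        ≤ (N : ℝ)⁻¹ * ∑ k, ∫ x, llr (S j) (S k) x ∂(S j) := by
  haveI : Nonempty (Fin N) := ⟨⟨0, hN⟩⟩
  have hNR : (0 : ℝ) < N := by exact_mod_cast hN
  have hN0 : (N : ℝ≥0∞) ≠ 0 := Nat.cast_ne_zero.mpr hN.ne'
  set Q : Measure α := (N : ℝ≥0∞)⁻¹ • ∑ k, S k with hQdef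
  set g : α → ℝ≥0∞ := fun x => (N : ℝ≥0∞)⁻¹ * ∑ k, (S k).rnDeriv (S j) x with hgdef
  have hgmeas : Measurable g := by
    apply Measurable.const_mul
    exact Finset.measurable_sum _ fun k _ => Measure.measurable_rnDeriv _ _
  have hwd : Q = (S j).withDensity g := by
    have h1 : (∑ k, S k : Measure α)
        = (S j).withDensity (fun x => ∑ k, (S k).rnDeriv (S j) x) := by
      rw [withDensity_finsum _ _ _ (fun k => Measure.measurable_rnDeriv _ _)]
      exact (Finset.sum_congr rfl fun k _ =>
        (Measure.withDensity_rnDeriv_eq _ _ (hac k j)).symm)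
    rw [hQdef, h1, ← withDensity_smul _
      (Finset.measurable_sum _ fun k _ => Measure.measurable_rnDeriv _ _)]
    rfl
  have hjQ : S j ≪ Q := by
    intro s hs
    simp only [hQdef, Measure.smul_apply, smul_eq_mul] at hs
    rcases mul_eq_zero.mp hs with h | h
    · exact absurd h (by simp [hN0])
    · rw [Measure.finset_sum_apply] at h
      exact (Finset.sum_eq_zero_iff.mp h) j (Finset.mem_univ j)
  have hQuniv : Q Set.univ = 1 := by
    simp only [hQdef, Measure.smul_apply, smul_eq_mul, Measure.finset_sum_apply, measure_univ,
      Finset.sum_const, Finset.card_univ, Fintype.card_fin, nsmul_eq_mul, mul_one]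
    exact ENNReal.inv_mul_cancel hN0 (ENNReal.natCast_ne_top N)
  haveI : IsProbabilityMeasure Q := ⟨hQuniv⟩
  have hrnQ : Q.rnDeriv (S j) =ᵐ[S j] g := by
    rw [hwd]; exact Measure.rnDeriv_withDensity (S j) hgmeas
  have hrnjQ : (S j).rnDeriv Q =ᵐ[S j] fun x => (g x)⁻¹ := by
    have h1 := Measure.inv_rnDeriv' hjQ
    filter_upwards [h1, hrnQ] with x hx hx2
    rw [← hx, Pi.inv_apply, hx2]
  have haepos : ∀ᵐ x ∂(S j), ∀ k, 0 < (S k).rnDeriv (S j) x :=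
    ae_all_iff.mpr fun k => Measure.rnDeriv_pos' (hac j k)
  have haelt : ∀ᵐ x ∂(S j), ∀ k : Fin N, (S k).rnDeriv (S j) x < ∞ :=
    ae_all_iff.mpr fun k => Measure.rnDeriv_lt_top (S k) (S j)
  have haellr : ∀ᵐ x ∂(S j), ∀ k : Fin N,
      llr (S j) (S k) x = -Real.log (((S k).rnDeriv (S j) x).toReal) := by
    rw [ae_all_iff]
    intro k
    filter_upwards [neg_llr (hac j k)] with x hx
    have : llr (S k) (S j) x = Real.log (((S k).rnDeriv (S j) x).toReal) := rfl
    simp only [Pi.neg_apply] at hx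
    linarith [hx, this]
  have hkey : ∀ᵐ x ∂(S j),
      llr (S j) Q x = Real.log N - Real.log (∑ k, ((S k).rnDeriv (S j) x).toReal)
      ∧ (∀ k, 0 < ((S k).rnDeriv (S j) x).toReal)
      ∧ (∀ k, llr (S j) (S k) x = -Real.log (((S k).rnDeriv (S j) x).toReal)) := by
    filter_upwards [hrnjQ, haepos, haelt, haellr] with x hinv hpos hlt hllr
    have ht : ∀ k, 0 < ((S k).rnDeriv (S j) x).toReal :=
      fun k => ENNReal.toReal_pos (hpos k).ne' (hlt k).ne
    refine ⟨?_, ht, hllr⟩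
    have htsum : (∑ k, (S k).rnDeriv (S j) x).toReal
        = ∑ k, ((S k).rnDeriv (S j) x).toReal :=
      ENNReal.toReal_sum fun k _ => (hlt k).ne
    have hspos : 0 < ∑ k, ((S k).rnDeriv (S j) x).toReal :=
      Finset.sum_pos (fun k _ => ht k) Finset.univ_nonempty
    have hthis : llr (S j) Q x = Real.log (((g x)⁻¹).toReal) := by rw [llr, hinv]
    rw [hthis, ENNReal.toReal_inv, hgdef]
    rw [ENNReal.toReal_mul, ENNReal.toReal_inv, ENNReal.toReal_natCast, htsum,
      Real.log_inv, Real.log_mul (inv_ne_zero hNR.ne') hspos.ne', Real.log_inv]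
    ring
  have hbound : ∀ᵐ x ∂(S j),
      ‖llr (S j) Q x‖ ≤ 2 * Real.log N + ∑ k, |llr (S j) (S k) x| := by
    filter_upwards [hkey] with x ⟨heq, hpos, hllr⟩
    have habs := abs_log_sum_le Finset.univ Finset.univ_nonempty
      (fun k => ((S k).rnDeriv (S j) x).toReal) (fun k _ => hpos k)
    rw [Finset.card_univ, Fintype.card_fin] at habs
    have hlogN : 0 ≤ Real.log N := Real.log_nonneg (by exact_mod_cast hN)
    have hsumeq : ∑ k, |llr (S j) (S k) x|
        = ∑ k, |Real.log (((S k).rnDeriv (S j) x).toReal)| := by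
      refine Finset.sum_congr rfl fun k _ => ?_
      rw [hllr k, abs_neg]
    rw [Real.norm_eq_abs, heq, hsumeq]
    calc |Real.log N - Real.log (∑ k, ((S k).rnDeriv (S j) x).toReal)|
        ≤ |Real.log N| + |Real.log (∑ k, ((S k).rnDeriv (S j) x).toReal)| := abs_sub _ _
      _ ≤ _ := by
          rw [abs_of_nonneg hlogN]
          linarith [habs]
  have hintQ : Integrable (llr (S j) Q) (S j) := by
    refine Integrable.mono' ?_ (measurable_llr _ _).aestronglyMeasurable hbound
    exact (integrable_const _).add (integrable_finset_sum _ fun k _ => (hint k).abs)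
  refine ⟨hintQ, ?_⟩
  have hle : ∀ᵐ x ∂(S j), llr (S j) Q x ≤ (N : ℝ)⁻¹ * ∑ k, llr (S j) (S k) x := by
    filter_upwards [hkey] with x ⟨heq, hpos, hllr⟩
    have hsl := sum_log_le Finset.univ Finset.univ_nonempty
      (fun k => ((S k).rnDeriv (S j) x).toReal) (fun k _ => hpos k)
    rw [Finset.card_univ, Fintype.card_fin] at hsl
    have hspos : 0 < ∑ k, ((S k).rnDeriv (S j) x).toReal :=
      Finset.sum_pos (fun k _ => hpos k) Finset.univ_nonempty
    have hlogdiv : Real.log ((∑ k, ((S k).rnDeriv (S j) x).toReal) / N)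
        = Real.log (∑ k, ((S k).rnDeriv (S j) x).toReal) - Real.log N :=
      Real.log_div hspos.ne' hNR.ne'
    rw [hlogdiv] at hsl
    have hsum2 : ∑ k, llr (S j) (S k) x
        = -∑ k, Real.log (((S k).rnDeriv (S j) x).toReal) := by
      rw [← Finset.sum_neg_distrib]
      exact Finset.sum_congr rfl fun k _ => hllr k
    rw [heq, hsum2]
    have hNinv : (0:ℝ) < (N:ℝ)⁻¹ := by positivity
    rw [mul_neg]
    have := mul_le_mul_of_nonneg_left hsl hNinv.le
    rw [mul_sub] at this
    have hNN : (N:ℝ)⁻¹ * ((N:ℝ) * (Real.log (∑ k, ((S k).rnDeriv (S j) x).toReal) - Real.log N))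
        = Real.log (∑ k, ((S k).rnDeriv (S j) x).toReal) - Real.log N := by
      field_simp
    nlinarith [this, hNN]
  calc ∫ x, llr (S j) Q x ∂(S j) ≤ ∫ x, (N : ℝ)⁻¹ * ∑ k, llr (S j) (S k) x ∂(S j) :=
        integral_mono_ae hintQ
          ((integrable_finset_sum _ fun k _ => hint k).const_mul _) hle
    _ = (N : ℝ)⁻¹ * ∑ k, ∫ x, llr (S j) (S k) x ∂(S j) := by
        rw [integral_const_mul, integral_finset_sum _ fun k _ => hint k]

lemma fano_core {N : ℕ} (hN : 2 ≤ N) {P K : ℝ} (hP0 : 0 ≤ P) (hP1 : P ≤ N)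
    (h : P * Real.log P + ((N : ℝ) - P) * Real.log (((N : ℝ) - P) / N) ≤ K / N) :
    P / N * Real.log N ≤ K / (N : ℝ) ^ 2 + Real.log 2 := by
  have hNn : 0 < N := lt_of_lt_of_le two_pos hN
  have hNR : (0:ℝ) < N := by exact_mod_cast hNn
  have hlog2 : 0 ≤ Real.log 2 := Real.log_nonneg one_le_two
  rcases hP0.eq_or_lt with h0 | hPpos
  · rw [← h0] at h ⊢
    rw [zero_div, zero_mul]
    have hz : (0:ℝ) * Real.log 0 + ((N:ℝ) - 0) * Real.log (((N:ℝ) - 0)/N) = 0 := by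
      rw [sub_zero, div_self hNR.ne']
      simp
    rw [hz] at h
    have hK : 0 ≤ K := by
      by_contra hneg
      push_neg at hneg
      have : K / N < 0 := div_neg_of_neg_of_pos hneg hNR
      linarith
    have : 0 ≤ K / (N:ℝ)^2 := by positivity
    linarith
  · set p := P / N with hp
    have hp0 : 0 ≤ p := by positivity
    have hp1 : p ≤ 1 := by rw [hp, div_le_one hNR]; exact hP1
    have hbin := binent_ge hp0 hp1
    have hppos : 0 < p := by rw [hp]; positivity
    have hPp : P = N * p := by rw [hp]; field_simp
    have hNP : (N:ℝ) - P = N * (1 - p) := by rw [hPp]; ring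
    have hsplit : P * Real.log P + ((N:ℝ) - P) * Real.log (((N:ℝ) - P)/N)
        = (N:ℝ) * (p * Real.log N + p * Real.log p + (1 - p) * Real.log (1 - p)) := by
      have hlogP : Real.log P = Real.log N + Real.log p := by
        rw [hPp, Real.log_mul hNR.ne' hppos.ne']
      have hdiv : ((N:ℝ) - P)/N = 1 - p := by rw [hNP]; field_simp
      rw [hlogP, hdiv, hNP, hPp]
      ring
    rw [hsplit] at h
    have hid : K / N = (N:ℝ) * (K / (N:ℝ)^2) := by field_simp
    rw [hid] at h
    have h2 : p * Real.log N + p * Real.log p + (1 - p) * Real.log (1 - p) ≤ K / (N:ℝ)^2 :=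
      le_of_mul_le_mul_left h hNR
    linarith [hbin]

end Helpers

/-- Fano's method for testing: for probability measures `S 1, …, S N`
(`N ≥ 2`) with pairwise finite KL divergences and any measurable test `ψ`,
`max_j S_j(ψ ≠ j) ≥ 1 − ((1/N²) ∑_{j,k} KL(S_j‖S_k) + log 2)/log N`; in particular, if
`N ≥ 4` and all `KL(S_j‖S_k) ≤ (log N)/4`, then `max_j S_j(ψ ≠ j) ≥ 1/4`. -/
theorem fano_method
    {D : Type*} [MeasurableSpace D] (N : ℕ) (hN : 2 ≤ N)
    (S : Fin N → Measure D) (hS : ∀ j, IsProbabilityMeasure (S j))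
    (hKLfin : ∀ j k, KLdiv (S j) (S k) < ∞)
    (ψ : D → Fin N) (hψ : Measurable ψ) :
    (1 - (((N : ℝ) ^ 2)⁻¹ * ∑ j, ∑ k, (KLdiv (S j) (S k)).toReal + Real.log 2) /
        Real.log N ≤ ⨆ j, (S j {d | ψ d ≠ j}).toReal) ∧
    (4 ≤ N → (∀ j k, (KLdiv (S j) (S k)).toReal ≤ Real.log N / 4) →
      (1 : ℝ) / 4 ≤ ⨆ j, (S j {d | ψ d ≠ j}).toReal) := by
  classical
  have hN0 : 0 < N := lt_of_lt_of_le two_pos hN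
  haveI : Nonempty (Fin N) := ⟨⟨0, hN0⟩⟩
  haveI : ∀ k, IsProbabilityMeasure (S k) := hS
  have hNR : (0:ℝ) < N := by exact_mod_cast hN0
  have hlogN : 0 < Real.log N := Real.log_pos (by exact_mod_cast hN)
  -- extract absolute continuity and integrability from finiteness of KL
  have hjk : ∀ j k, S j ≪ S k ∧ Integrable (llr (S j) (S k)) (S j) := by
    intro j k
    have h := hKLfin j k
    unfold KLdiv at h
    split_ifs at h with hc
    · exact ⟨hc.1, hc.2⟩
    · exact absurd h (lt_irrefl _)
  have hac : ∀ j k, S j ≪ S k := fun j k => (hjk j k).1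
  have hint : ∀ j k, Integrable (llr (S j) (S k)) (S j) := fun j k => (hjk j k).2
  have hIle : ∀ j k, ∫ x, llr (S j) (S k) x ∂(S j) ≤ (KLdiv (S j) (S k)).toReal := by
    intro j k
    unfold KLdiv
    rw [if_pos ⟨hac j k, hint j k⟩, ENNReal.toReal_ofReal']
    exact le_max_left _ _
  -- the test sets
  set A : Fin N → Set D := fun j => ψ ⁻¹' {j} with hA
  have hAmeas : ∀ j, MeasurableSet (A j) := fun j => hψ (measurableSet_singleton j)
  -- the mixture measure
  set Q : Measure D := (N : ℝ≥0∞)⁻¹ • ∑ k, S k with hQdef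
  have hmix : ∀ j, Integrable (llr (S j) Q) (S j) ∧
      ∫ x, llr (S j) Q x ∂(S j) ≤ (N : ℝ)⁻¹ * ∑ k, ∫ x, llr (S j) (S k) x ∂(S j) :=
    fun j => mixture_llr hN0 S hac j (hint j)
  have hN0e : (N : ℝ≥0∞) ≠ 0 := Nat.cast_ne_zero.mpr hN0.ne'
  have hQj : ∀ j, Q ≪ S j := by
    intro j s hs
    have hsum : (∑ k, S k : Measure D) s = 0 := by
      rw [Measure.finset_sum_apply]
      exact Finset.sum_eq_zero fun k _ => hac k j hs
    simp only [hQdef, Measure.smul_apply, smul_eq_mul, hsum, mul_zero]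
  have hjQ : ∀ j, S j ≪ Q := by
    intro j s hs
    simp only [hQdef, Measure.smul_apply, smul_eq_mul] at hs
    rcases mul_eq_zero.mp hs with h | h
    · exact absurd h (by simp [hN0e])
    · rw [Measure.finset_sum_apply] at h
      exact (Finset.sum_eq_zero_iff.mp h) j (Finset.mem_univ j)
  have hQuniv : Q Set.univ = 1 := by
    simp only [hQdef, Measure.smul_apply, smul_eq_mul, Measure.finset_sum_apply, measure_univ,
      Finset.sum_const, Finset.card_univ, Fintype.card_fin, nsmul_eq_mul, mul_one]
    exact ENNReal.inv_mul_cancel hN0e (ENNReal.natCast_ne_top N)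
  haveI : IsProbabilityMeasure Q := ⟨hQuniv⟩
  -- complements
  have hSc : ∀ j, (S j (A j)ᶜ).toReal = 1 - (S j (A j)).toReal := by
    intro j
    rw [prob_compl_eq_one_sub (hAmeas j),
      ENNReal.toReal_sub_of_le prob_le_one ENNReal.one_ne_top, ENNReal.toReal_one]
  have hQc : ∀ j, (Q (A j)ᶜ).toReal = 1 - (Q (A j)).toReal := by
    intro j
    rw [prob_compl_eq_one_sub (hAmeas j),
      ENNReal.toReal_sub_of_le prob_le_one ENNReal.one_ne_top, ENNReal.toReal_one]
  have hp1 : ∀ j, (S j (A j)).toReal ≤ 1 := by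
    intro j
    rw [← ENNReal.toReal_one]
    exact ENNReal.toReal_mono ENNReal.one_ne_top prob_le_one
  have hq1' : ∀ j, (Q (A j)).toReal ≤ 1 := by
    intro j
    rw [← ENNReal.toReal_one]
    exact ENNReal.toReal_mono ENNReal.one_ne_top prob_le_one
  -- the q's sum to one
  have hdisj : Pairwise (Function.onFun Disjoint A) := by
    intro i k hik
    rw [Function.onFun, Set.disjoint_left]
    intro d hdi hdk
    rw [hA, Set.mem_preimage, Set.mem_singleton_iff] at hdi hdk
    exact hik (hdi.symm.trans hdk)
  have hUnion : (⋃ j, A j) = Set.univ := by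
    ext d
    simp [hA]
  have hQsum : ∑ j, Q (A j) = 1 := by
    rw [← tsum_fintype (L := SummationFilter.unconditional (Fin N)), ← measure_iUnion hdisj hAmeas, hUnion, hQuniv]
  have hq1 : ∑ j, (Q (A j)).toReal = 1 := by
    rw [← ENNReal.toReal_sum fun j _ => measure_ne_top Q _, hQsum, ENNReal.toReal_one]
  have hqp : ∀ j, (Q (A j)).toReal = 0 → (S j (A j)).toReal = 0 := by
    intro j h
    have hQ0 : Q (A j) = 0 := by
      rcases (ENNReal.toReal_eq_zero_iff _).mp h with h' | h'
      · exact h'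
      · exact absurd h' (measure_ne_top _ _)
    rw [hjQ j hQ0]
    simp
  -- the per-measure lower bound
  have hperj : ∀ j, (S j (A j)).toReal * Real.log ((S j (A j)).toReal / (Q (A j)).toReal)
      + (1 - (S j (A j)).toReal) * Real.log (1 - (S j (A j)).toReal)
      ≤ ∫ x, llr (S j) Q x ∂(S j) := by
    intro j
    have hintQ := (hmix j).1
    have h1 := setIntegral_llr_ge (hjQ j) (hQj j) hintQ (hAmeas j)
    have h2 := setIntegral_llr_ge (hjQ j) (hQj j) hintQ (hAmeas j).compl
    rw [hSc j, hQc j] at h2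
    have h2' : (1 - (S j (A j)).toReal) * Real.log (1 - (S j (A j)).toReal)
        ≤ ∫ x in (A j)ᶜ, llr (S j) Q x ∂(S j) := by
      refine le_trans (mul_log_div_ge (by linarith [hp1 j]) (by linarith [hq1' j])
        (by linarith [ENNReal.toReal_nonneg (a := Q (A j))]) ?_) h2
      intro h0
      have hq0 : (Q (A j)).toReal = 1 := by linarith
      have hQ0 : Q (A j)ᶜ = 0 := by
        have := hQc j
        rw [hq0] at this
        simp only [sub_self] at this
        rcases (ENNReal.toReal_eq_zero_iff _).mp this with h' | h'
        · exact h'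
        · exact absurd h' (measure_ne_top _ _)
      have hS0 : S j (A j)ᶜ = 0 := hjQ j hQ0
      have := hSc j
      rw [hS0] at this
      simp only [ENNReal.toReal_zero] at this
      linarith
    calc (S j (A j)).toReal * Real.log ((S j (A j)).toReal / (Q (A j)).toReal)
        + (1 - (S j (A j)).toReal) * Real.log (1 - (S j (A j)).toReal)
        ≤ (∫ x in A j, llr (S j) Q x ∂(S j)) + ∫ x in (A j)ᶜ, llr (S j) Q x ∂(S j) :=
          add_le_add h1 h2'
      _ = ∫ x, llr (S j) Q x ∂(S j) := integral_add_compl (hAmeas j) hintQ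
  -- summing up
  set P : ℝ := ∑ j, (S j (A j)).toReal with hPdef
  set K : ℝ := ∑ j, ∑ k, (KLdiv (S j) (S k)).toReal with hKdef
  have hP0 : 0 ≤ P := Finset.sum_nonneg fun j _ => ENNReal.toReal_nonneg
  have hP1 : P ≤ N := by
    have := Finset.sum_le_card_nsmul Finset.univ (fun j => (S j (A j)).toReal) 1
      (fun j _ => hp1 j)
    simpa [Finset.card_univ, nsmul_eq_mul] using this
  have hR1 := logsum_ineq Finset.univ (fun j => (S j (A j)).toReal)
    (fun j => (Q (A j)).toReal) (fun j _ => ENNReal.toReal_nonneg)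
    (fun j _ => ENNReal.toReal_nonneg) (fun j _ => hqp j) hq1
  have hR2 := sum_mul_log_ge Finset.univ (fun j => 1 - (S j (A j)).toReal)
    (fun j _ => by show (0:ℝ) ≤ 1 - (S j (A j)).toReal; linarith [hp1 j])
  rw [Finset.card_univ, Fintype.card_fin] at hR2
  have hsum1p : ∑ j, (1 - (S j (A j)).toReal) = (N:ℝ) - P := by
    rw [Finset.sum_sub_distrib, Finset.sum_const, Finset.card_univ, Fintype.card_fin,
      nsmul_eq_mul, mul_one, hPdef]
  rw [hsum1p] at hR2
  have hupper : ∑ j, ∫ x, llr (S j) Q x ∂(S j) ≤ (N:ℝ)⁻¹ * K := by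
    calc ∑ j, ∫ x, llr (S j) Q x ∂(S j)
        ≤ ∑ j, (N:ℝ)⁻¹ * ∑ k, ∫ x, llr (S j) (S k) x ∂(S j) :=
          Finset.sum_le_sum fun j _ => (hmix j).2
      _ ≤ ∑ j, (N:ℝ)⁻¹ * ∑ k, (KLdiv (S j) (S k)).toReal :=
          Finset.sum_le_sum fun j _ => mul_le_mul_of_nonneg_left
            (Finset.sum_le_sum fun k _ => hIle j k) (by positivity)
      _ = (N:ℝ)⁻¹ * K := by rw [← Finset.mul_sum, hKdef]
  have hlower : P * Real.log P + ((N:ℝ) - P) * Real.log (((N:ℝ) - P)/N)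
      ≤ ∑ j, ∫ x, llr (S j) Q x ∂(S j) := by
    have hsum_le := Finset.sum_le_sum fun j (_ : j ∈ Finset.univ) => hperj j
    rw [Finset.sum_add_distrib] at hsum_le
    calc P * Real.log P + ((N:ℝ) - P) * Real.log (((N:ℝ) - P)/N)
        ≤ (∑ j, (S j (A j)).toReal * Real.log ((S j (A j)).toReal / (Q (A j)).toReal))
          + ∑ j, (1 - (S j (A j)).toReal) * Real.log (1 - (S j (A j)).toReal) :=
          add_le_add hR1 hR2
      _ ≤ _ := hsum_le
  have hchain : P * Real.log P + ((N:ℝ) - P) * Real.log (((N:ℝ) - P)/N) ≤ K / N := by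
    have : (N:ℝ)⁻¹ * K = K / N := by rw [div_eq_inv_mul]
    linarith [hlower, hupper]
  have hPK := fano_core hN hP0 hP1 hchain
  -- relating to the sup of error probabilities
  have hbdd : BddAbove (Set.range fun j => (S j {d | ψ d ≠ j}).toReal) :=
    (Set.finite_range _).bddAbove
  have hcompl_set : ∀ j : Fin N, {d | ψ d ≠ j} = (A j)ᶜ := by
    intro j
    ext d
    simp [hA]
  have hsum_e : ∑ j, (S j {d | ψ d ≠ j}).toReal = (N:ℝ) - P := by
    calc ∑ j, (S j {d | ψ d ≠ j}).toReal = ∑ j, (1 - (S j (A j)).toReal) :=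
          Finset.sum_congr rfl fun j _ => by rw [hcompl_set j, hSc j]
      _ = (N:ℝ) - P := hsum1p
  have hNP_le : (N:ℝ) - P ≤ N * ⨆ j, (S j {d | ψ d ≠ j}).toReal := by
    rw [← hsum_e]
    have := Finset.sum_le_card_nsmul Finset.univ (fun j => (S j {d | ψ d ≠ j}).toReal)
      (⨆ j, (S j {d | ψ d ≠ j}).toReal) (fun j _ => le_ciSup hbdd j)
    simpa [Finset.card_univ, nsmul_eq_mul] using this
  have h1mP : 1 - P / N ≤ ⨆ j, (S j {d | ψ d ≠ j}).toReal := by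
    rw [show (1:ℝ) - P / N = ((N:ℝ) - P) / N by field_simp, div_le_iff₀ hNR]
    linarith [hNP_le]
  have hmain : 1 - (((N : ℝ) ^ 2)⁻¹ * K + Real.log 2) / Real.log N
      ≤ ⨆ j, (S j {d | ψ d ≠ j}).toReal := by
    have hPle : P / N ≤ (((N:ℝ)^2)⁻¹ * K + Real.log 2) / Real.log N := by
      rw [le_div_iff₀ hlogN]
      have : K / (N:ℝ)^2 = ((N:ℝ)^2)⁻¹ * K := by rw [div_eq_inv_mul]
      linarith [hPK]
    linarith [h1mP, hPle]
  refine ⟨hmain, fun h4 hKL => ?_⟩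
  -- part 2
  have hlog4 : Real.log 4 ≤ Real.log N := Real.log_le_log (by norm_num) (by exact_mod_cast h4)
  have hlog4' : Real.log 4 = 2 * Real.log 2 := by
    rw [show (4:ℝ) = 2^2 by norm_num, Real.log_pow]
    push_cast
    ring
  have hlogN4 : 0 ≤ Real.log N / 4 := by positivity
  have hKbound : K ≤ (N:ℝ)^2 * (Real.log N / 4) := by
    calc K ≤ ∑ _j : Fin N, ∑ _k : Fin N, (Real.log N / 4) :=
          Finset.sum_le_sum fun j _ => Finset.sum_le_sum fun k _ => hKL j k
      _ = (N:ℝ)^2 * (Real.log N / 4) := by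
          simp [Finset.sum_const, Finset.card_univ]
          ring
  have hC : ((N:ℝ)^2)⁻¹ * K + Real.log 2 ≤ Real.log N / 4 + Real.log 2 := by
    have hN2 : (0:ℝ) < (N:ℝ)^2 := by positivity
    have h := mul_le_mul_of_nonneg_left hKbound (inv_nonneg.mpr hN2.le)
    have hcan : ((N:ℝ)^2)⁻¹ * ((N:ℝ)^2 * (Real.log N / 4)) = Real.log N / 4 := by
      field_simp
    linarith [h, hcan]
  have hfrac : (Real.log N / 4 + Real.log 2) / Real.log N ≤ 3 / 4 := by
    rw [div_le_iff₀ hlogN]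
    nlinarith [hlog4, hlog4', hlogN]
  have hmono : (((N:ℝ)^2)⁻¹ * K + Real.log 2) / Real.log N
      ≤ (Real.log N / 4 + Real.log 2) / Real.log N :=
    (div_le_div_iff_of_pos_right hlogN).mpr hC
  linarith [hmain, hmono, hfrac]
end

section
/- Let p ∈ (0, 1]. For each n ≥ 1 let e_n := ∑_{k=1}^{n} (1/k)·C(n,k)·p^k·(1−p)^{n−k} be the expectation of 1{X > 0}/X when X is Binomial(n, p). Then n·e_n → 1/p as n → ∞. -/
open Filter Finset

private lemma binap_key1 (p : ℝ) (n : ℕ) :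
    ((n : ℝ) + 1) * p *
      ∑ k ∈ Finset.Icc 1 n, (1 / ((k : ℝ) + 1)) * (n.choose k : ℝ) * p ^ k * (1 - p) ^ (n - k)
      = (p + (1 - p)) ^ (n + 1) - (1 - p) ^ (n + 1) - ((n : ℝ) + 1) * p * (1 - p) ^ n := by
  set q : ℝ := 1 - p with hq
  have hbin : (p + q) ^ (n + 1)
      = ∑ j ∈ Finset.range (n + 2), p ^ j * q ^ (n + 1 - j) * ((n + 1).choose j : ℝ) :=
    add_pow p q (n + 1)
  have hL : ((n : ℝ) + 1) * p *
      ∑ k ∈ Finset.Icc 1 n, (1 / ((k : ℝ) + 1)) * (n.choose k : ℝ) * p ^ k * q ^ (n - k)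
      = ∑ k ∈ Finset.Icc 1 n, p ^ (k + 1) * q ^ (n + 1 - (k + 1)) * ((n + 1).choose (k + 1) : ℝ) := by
    rw [Finset.mul_sum]
    refine Finset.sum_congr rfl fun k hk => ?_
    have h1 : (n + 1) * n.choose k = (n + 1).choose (k + 1) * (k + 1) := Nat.add_one_mul_choose_eq n k
    have h2 : ((n : ℝ) + 1) * (n.choose k : ℝ) = ((n + 1).choose (k + 1) : ℝ) * ((k : ℝ) + 1) := by
      exact_mod_cast congrArg (Nat.cast : ℕ → ℝ) h1
    have hk1 : ((k : ℝ) + 1) ≠ 0 := by positivity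
    have hsub : n + 1 - (k + 1) = n - k := by omega
    rw [hsub]
    have h3 : ((n : ℝ) + 1) * p * ((1 / ((k : ℝ) + 1)) * (n.choose k : ℝ) * p ^ k * q ^ (n - k))
        = (((n : ℝ) + 1) * (n.choose k : ℝ)) * (1 / ((k : ℝ) + 1)) * (p ^ (k + 1) * q ^ (n - k)) := by
      ring
    rw [h3, h2]
    field_simp
  rw [hL]
  have hre : ∑ k ∈ Finset.Icc 1 n, p ^ (k + 1) * q ^ (n + 1 - (k + 1)) * ((n + 1).choose (k + 1) : ℝ)
      = ∑ i ∈ Finset.range n, p ^ (i + 1 + 1) * q ^ (n + 1 - (i + 1 + 1)) * ((n + 1).choose (i + 1 + 1) : ℝ) := by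
    rw [← Finset.Ico_add_one_right_eq_Icc, Finset.sum_Ico_eq_sum_range]
    have h3 : n + 1 - 1 = n := by omega
    rw [h3]
    refine Finset.sum_congr rfl fun i _ => ?_
    have h4 : 1 + i = i + 1 := by omega
    rw [h4]
  rw [hre, hbin]
  rw [Finset.sum_range_succ' (fun j => p ^ j * q ^ (n + 1 - j) * ((n + 1).choose j : ℝ)) (n + 1)]
  rw [Finset.sum_range_succ' (fun j => p ^ (j + 1) * q ^ (n + 1 - (j + 1)) * ((n + 1).choose (j + 1) : ℝ)) n]
  simp only [Nat.choose_zero_right, Nat.choose_one_right, pow_zero, pow_one, Nat.cast_one,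
    Nat.cast_add, Nat.add_sub_cancel, Nat.sub_zero]
  push_cast [Nat.choose_one_right]
  ring

private lemma binap_key2 (p : ℝ) (hp0 : 0 < p) (hp1 : p ≤ 1) (n : ℕ) :
    ((n : ℝ) + 1) * ((n : ℝ) + 2) * p ^ 2 *
      ∑ k ∈ Finset.Icc 1 n,
        (1 / (((k : ℝ) + 1) * ((k : ℝ) + 2))) * (n.choose k : ℝ) * p ^ k * (1 - p) ^ (n - k)
      ≤ 1 := by
  set q : ℝ := 1 - p with hq
  have hq0 : 0 ≤ q := by rw [hq]; linarith
  have hL : ((n : ℝ) + 1) * ((n : ℝ) + 2) * p ^ 2 *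
      ∑ k ∈ Finset.Icc 1 n,
        (1 / (((k : ℝ) + 1) * ((k : ℝ) + 2))) * (n.choose k : ℝ) * p ^ k * q ^ (n - k)
      = ∑ k ∈ Finset.Icc 1 n, p ^ (k + 2) * q ^ (n + 2 - (k + 2)) * ((n + 2).choose (k + 2) : ℝ) := by
    rw [Finset.mul_sum]
    refine Finset.sum_congr rfl fun k hk => ?_
    have h1 : (n + 1) * n.choose k = (n + 1).choose (k + 1) * (k + 1) := Nat.add_one_mul_choose_eq n k
    have h1' : (n + 2) * (n + 1).choose (k + 1) = (n + 2).choose (k + 2) * (k + 2) :=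
      Nat.add_one_mul_choose_eq (n + 1) (k + 1)
    have h2 : ((n : ℝ) + 1) * (n.choose k : ℝ) = ((n + 1).choose (k + 1) : ℝ) * ((k : ℝ) + 1) := by
      exact_mod_cast congrArg (Nat.cast : ℕ → ℝ) h1
    have h2' : ((n : ℝ) + 2) * ((n + 1).choose (k + 1) : ℝ)
        = ((n + 2).choose (k + 2) : ℝ) * ((k : ℝ) + 2) := by
      exact_mod_cast congrArg (Nat.cast : ℕ → ℝ) h1'
    have hk1 : ((k : ℝ) + 1) ≠ 0 := by positivity
    have hk2 : ((k : ℝ) + 2) ≠ 0 := by positivity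
    have hsub : n + 2 - (k + 2) = n - k := by omega
    rw [hsub]
    have h3 : ((n : ℝ) + 1) * ((n : ℝ) + 2) * p ^ 2 *
        ((1 / (((k : ℝ) + 1) * ((k : ℝ) + 2))) * (n.choose k : ℝ) * p ^ k * q ^ (n - k))
        = (((n : ℝ) + 2) * ((((n : ℝ) + 1) * (n.choose k : ℝ)))) *
            (1 / (((k : ℝ) + 1) * ((k : ℝ) + 2))) * (p ^ (k + 2) * q ^ (n - k)) := by
      ring
    rw [h3, h2]
    have h4 : ((n : ℝ) + 2) * (((n + 1).choose (k + 1) : ℝ) * ((k : ℝ) + 1))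
        = (((n : ℝ) + 2) * ((n + 1).choose (k + 1) : ℝ)) * ((k : ℝ) + 1) := by ring
    rw [h4, h2']
    field_simp
  rw [hL]
  have hre : ∑ k ∈ Finset.Icc 1 n, p ^ (k + 2) * q ^ (n + 2 - (k + 2)) * ((n + 2).choose (k + 2) : ℝ)
      = ∑ j ∈ Finset.Ico 3 (n + 3), p ^ j * q ^ (n + 2 - j) * ((n + 2).choose j : ℝ) := by
    rw [Finset.sum_Ico_eq_sum_range]
    have h3 : n + 3 - 3 = n := by omega
    rw [h3, ← Finset.Ico_add_one_right_eq_Icc, Finset.sum_Ico_eq_sum_range]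
    have h4 : n + 1 - 1 = n := by omega
    rw [h4]
    refine Finset.sum_congr rfl fun i _ => ?_
    have h5 : 1 + i + 2 = 3 + i := by omega
    rw [h5]
  rw [hre]
  have hsub : Finset.Ico 3 (n + 3) ⊆ Finset.range (n + 3) := by
    rw [Finset.range_eq_Ico]
    exact Finset.Ico_subset_Ico (by omega) le_rfl
  have hle : ∑ j ∈ Finset.Ico 3 (n + 3), p ^ j * q ^ (n + 2 - j) * ((n + 2).choose j : ℝ)
      ≤ ∑ j ∈ Finset.range (n + 3), p ^ j * q ^ (n + 2 - j) * ((n + 2).choose j : ℝ) := by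
    refine Finset.sum_le_sum_of_subset_of_nonneg hsub fun j _ _ => ?_
    have hpn : (0:ℝ) ≤ p := hp0.le
    positivity
  refine hle.trans ?_
  rw [← add_pow p q (n + 2)]
  have hpq : p + q = 1 := by rw [hq]; ring
  rw [hpq, one_pow]

/-- If `X ~ Binomial(n, p)` with `p ∈ (0, 1]` and
`e_n = E[1{X > 0}/X] = ∑_{k=1}^n (1/k)·C(n,k)·p^k·(1−p)^{n−k}`, then
`n·e_n → 1/p` as `n → ∞`. -/
theorem binomial_inverse_moment_limit (p : ℝ) (hp0 : 0 < p) (hp1 : p ≤ 1) :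
    Filter.Tendsto
      (fun n : ℕ => (n : ℝ) *
        ∑ k ∈ Finset.Icc 1 n,
          (1 / (k : ℝ)) * (n.choose k : ℝ) * p ^ k * (1 - p) ^ (n - k))
      Filter.atTop (nhds (1 / p)) := by
  set q : ℝ := 1 - p with hq
  have hq0 : 0 ≤ q := by rw [hq]; linarith
  have hq1 : q < 1 := by rw [hq]; linarith
  set S1 : ℕ → ℝ := fun n =>
    ∑ k ∈ Finset.Icc 1 n, (1 / ((k : ℝ) + 1)) * (n.choose k : ℝ) * p ^ k * q ^ (n - k) with hS1
  set S2 : ℕ → ℝ := fun n =>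
    ∑ k ∈ Finset.Icc 1 n,
      (1 / (((k : ℝ) + 1) * ((k : ℝ) + 2))) * (n.choose k : ℝ) * p ^ k * q ^ (n - k) with hS2
  have hterm_nonneg : ∀ n k : ℕ, (0:ℝ) ≤ (n.choose k : ℝ) * p ^ k * q ^ (n - k) := by
    intro n k
    have hpn : (0:ℝ) ≤ p := hp0.le
    positivity
  have hS2_nonneg : ∀ n, 0 ≤ S2 n := by
    intro n
    simp only [hS2]
    refine Finset.sum_nonneg fun k hk => ?_
    have hpn : (0:ℝ) ≤ p := hp0.le
    positivity
  have hnp : ∀ n : ℕ, ((n : ℝ) + 1) * p ≠ 0 := by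
    intro n; positivity
  have hS1form : ∀ n : ℕ, S1 n
      = (1 - q ^ (n + 1) - ((n : ℝ) + 1) * p * q ^ n) / (((n : ℝ) + 1) * p) := by
    intro n
    have h : ((n : ℝ) + 1) * p * S1 n
        = (p + q) ^ (n + 1) - q ^ (n + 1) - ((n : ℝ) + 1) * p * q ^ n := binap_key1 p n
    have hpq : p + q = 1 := by rw [hq]; ring
    rw [hpq, one_pow] at h
    rw [eq_div_iff (hnp n)]
    linarith [h]
  have hlow : Filter.Tendsto (fun n : ℕ => (n : ℝ) * S1 n) atTop (nhds (1 / p)) := by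
    have heq : ∀ n : ℕ, (n : ℝ) * S1 n
        = ((n : ℝ) / ((n : ℝ) + 1)) * (1 / p) * (1 - q ^ (n + 1)) - (n : ℝ) * q ^ n := by
      intro n
      rw [hS1form n]
      have h1 : ((n : ℝ) + 1) ≠ 0 := by positivity
      field_simp
    have hA : Filter.Tendsto (fun n : ℕ => (n : ℝ) / ((n : ℝ) + 1)) atTop (nhds 1) :=
      tendsto_natCast_div_add_atTop (1 : ℝ)
    have hqpow : Filter.Tendsto (fun n : ℕ => q ^ n) atTop (nhds 0) :=
      tendsto_pow_atTop_nhds_zero_of_lt_one hq0 hq1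
    have hB : Filter.Tendsto (fun n : ℕ => 1 - q ^ (n + 1)) atTop (nhds 1) := by
      have h1 : Filter.Tendsto (fun n : ℕ => q ^ (n + 1)) atTop (nhds 0) :=
        hqpow.comp (tendsto_add_atTop_nat 1)
      have h2 := Filter.Tendsto.sub
        (tendsto_const_nhds : Filter.Tendsto (fun _ : ℕ => (1:ℝ)) atTop (nhds 1)) h1
      simpa using h2
    have hC : Filter.Tendsto (fun n : ℕ => (n : ℝ) * q ^ n) atTop (nhds 0) := by
      have hs : Summable (fun n : ℕ => (n : ℝ) ^ 1 * q ^ n) :=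
        summable_pow_mul_geometric_of_norm_lt_one 1
          (by rwa [Real.norm_eq_abs, abs_of_nonneg hq0])
      have h1 := hs.tendsto_atTop_zero
      simpa using h1
    have hfin := ((hA.mul (tendsto_const_nhds :
      Filter.Tendsto (fun _ : ℕ => 1 / p) atTop (nhds (1 / p)))).mul hB).sub hC
    simp only [one_mul, mul_one, sub_zero] at hfin
    exact Filter.Tendsto.congr (fun n => (heq n).symm) hfin
  have hS2tend : Filter.Tendsto (fun n : ℕ => (n : ℝ) * S2 n) atTop (nhds 0) := by
    have hub : ∀ n : ℕ, (n : ℝ) * S2 n ≤ (1 / ((n : ℝ) + 1)) * (1 / p ^ 2) := by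
      intro n
      have hk2 : ((n : ℝ) + 1) * ((n : ℝ) + 2) * p ^ 2 * S2 n ≤ 1 := binap_key2 p hp0 hp1 n
      have hS2n := hS2_nonneg n
      have hd : (0:ℝ) < ((n : ℝ) + 1) * p ^ 2 := by positivity
      have key : (n : ℝ) * S2 n * (((n : ℝ) + 1) * p ^ 2) ≤ 1 := by
        nlinarith [mul_nonneg (mul_nonneg (by positivity : (0:ℝ) ≤ ((n:ℝ)+1) * p ^ 2)
          hS2n) (by norm_num : (0:ℝ) ≤ 2)]
      calc (n : ℝ) * S2 n ≤ 1 / (((n : ℝ) + 1) * p ^ 2) := by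
            rw [le_div_iff₀ hd]; exact key
        _ = (1 / ((n : ℝ) + 1)) * (1 / p ^ 2) := by rw [one_div_mul_one_div]
    have hlb : ∀ n : ℕ, 0 ≤ (n : ℝ) * S2 n := fun n =>
      mul_nonneg (Nat.cast_nonneg n) (hS2_nonneg n)
    have htend : Filter.Tendsto (fun n : ℕ => (1 / ((n : ℝ) + 1)) * (1 / p ^ 2))
        atTop (nhds 0) := by
      have h1 := tendsto_one_div_add_atTop_nhds_zero_nat.mul_const (1 / p ^ 2)
      simpa using h1
    exact squeeze_zero hlb hub htend
  have hupp : Filter.Tendsto (fun n : ℕ => (n : ℝ) * S1 n + 3 * ((n : ℝ) * S2 n))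
      atTop (nhds (1 / p)) := by
    have h1 := hlow.add (hS2tend.const_mul (3:ℝ))
    simpa using h1
  refine tendsto_of_tendsto_of_tendsto_of_le_of_le hlow hupp ?_ ?_
  · intro n
    refine mul_le_mul_of_nonneg_left ?_ (Nat.cast_nonneg n)
    refine Finset.sum_le_sum fun k hk => ?_
    have hk1 : 1 ≤ k := (Finset.mem_Icc.mp hk).1
    have hk1' : (1:ℝ) ≤ (k:ℝ) := by exact_mod_cast hk1
    have h1 : 1 / ((k : ℝ) + 1) ≤ 1 / (k : ℝ) :=
      one_div_le_one_div_of_le (by linarith) (by linarith)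
    have h2 := hterm_nonneg n k
    calc (1 / ((k : ℝ) + 1)) * (n.choose k : ℝ) * p ^ k * q ^ (n - k)
        = (1 / ((k : ℝ) + 1)) * ((n.choose k : ℝ) * p ^ k * q ^ (n - k)) := by ring
      _ ≤ (1 / (k : ℝ)) * ((n.choose k : ℝ) * p ^ k * q ^ (n - k)) :=
          mul_le_mul_of_nonneg_right h1 h2
      _ = (1 / (k : ℝ)) * (n.choose k : ℝ) * p ^ k * q ^ (n - k) := by ring
  · intro n
    have key : (∑ k ∈ Finset.Icc 1 n, (1 / (k : ℝ)) * (n.choose k : ℝ) * p ^ k * q ^ (n - k))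
        ≤ S1 n + 3 * S2 n := by
      simp only [hS1, hS2, Finset.mul_sum, ← Finset.sum_add_distrib]
      refine Finset.sum_le_sum fun k hk => ?_
      have hk1 : 1 ≤ k := (Finset.mem_Icc.mp hk).1
      have hk1' : (1:ℝ) ≤ (k:ℝ) := by exact_mod_cast hk1
      have hkpos : (0:ℝ) < (k:ℝ) := by linarith
      have h1 : 1 / (k : ℝ) ≤ 1 / ((k : ℝ) + 1) + 3 / (((k : ℝ) + 1) * ((k : ℝ) + 2)) := by
        rw [div_add_div _ _ (by positivity) (by positivity),
          div_le_div_iff₀ hkpos (by positivity)]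
        nlinarith
      have h2 := hterm_nonneg n k
      calc (1 / (k : ℝ)) * (n.choose k : ℝ) * p ^ k * q ^ (n - k)
          = (1 / (k : ℝ)) * ((n.choose k : ℝ) * p ^ k * q ^ (n - k)) := by ring
        _ ≤ (1 / ((k : ℝ) + 1) + 3 / (((k : ℝ) + 1) * ((k : ℝ) + 2)))
              * ((n.choose k : ℝ) * p ^ k * q ^ (n - k)) :=
            mul_le_mul_of_nonneg_right h1 h2
        _ = (1 / ((k : ℝ) + 1)) * (n.choose k : ℝ) * p ^ k * q ^ (n - k)
            + 3 * ((1 / (((k : ℝ) + 1) * ((k : ℝ) + 2))) * (n.choose k : ℝ) * p ^ k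
                * q ^ (n - k)) := by
            ring
    have hn0 : (0:ℝ) ≤ (n:ℝ) := Nat.cast_nonneg n
    calc (n : ℝ) * ∑ k ∈ Finset.Icc 1 n, (1 / (k : ℝ)) * (n.choose k : ℝ) * p ^ k * q ^ (n - k)
        ≤ (n : ℝ) * (S1 n + 3 * S2 n) := mul_le_mul_of_nonneg_left key hn0
      _ = (n : ℝ) * S1 n + 3 * ((n : ℝ) * S2 n) := by ring
end

section
/- (Impossibility without bounded means.) Consider the multi-source sampling model with σ > 0, and suppose there exists z* ∈ Fin K with q_T(z*) > 0 and q_m(z*) < 1 for every source m with n_m > 0. Then for every measurable estimator θ̂ : (Fin N → Fin K × ℝ) → ℝ and every constant C > 0, there exists a Markov kernel κ from Fin K to ℝ satisfying ∫ (y − μ_z)² d(κ z) ≤ σ² for every z (one may take each κ z to be a Gaussian with variance σ²), such that the risk E_D[(θ̂(D) − ∑_z q_T(z) μ_z)²] ≥ C. In other words, the supremum of the risk over all variance-bounded Markov kernels is infinite for every sampling plan and estimator. -/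
open MeasureTheory ProbabilityTheory

/-- The discrete measure on `Fin K` associated with a probability vector `w`. -/
noncomputable def discMeasure {K : ℕ} (w : Fin K → ℝ) : Measure (Fin K) :=
  ∑ z : Fin K, ENNReal.ofReal (w z) • Measure.dirac z

/-- The joint law of the dataset in the multi-source sampling model: observation `i`
is drawn independently, with group `Z ~ q_{src i}` and response `Y | Z = z ~ κ z`. -/
noncomputable def jointLaw {K M N : ℕ} (qsrc : Fin M → Fin K → ℝ)
    (κ : Kernel (Fin K) ℝ) (src : Fin N → Fin M) :
    Measure (Fin N → Fin K × ℝ) :=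
  Measure.pi fun i =>
    (discMeasure (qsrc (src i))).bind fun z => (κ z).map fun y => (z, y)

/-- Impossibility without bounded means: if some group `z*` has positive
target probability but probability `< 1` in every source actually sampled, then for any
measurable estimator and any `C > 0` there is a Markov kernel with conditional variances
bounded by `σ²` under which the risk for the population mean is at least `C`. -/
theorem impossibility_without_bounded_means
    {K M N : ℕ} (hK : 1 ≤ K) (hM : 1 ≤ M) (σ : ℝ) (hσ : 0 < σ)
    (qsrc : Fin M → Fin K → ℝ)
    (hqsrc : ∀ m, (∀ z, 0 ≤ qsrc m z) ∧ ∑ z, qsrc m z = 1)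
    (qT : Fin K → ℝ) (hqT : (∀ z, 0 ≤ qT z) ∧ ∑ z, qT z = 1)
    (n : Fin M → ℕ) (hN : N = ∑ m, n m)
    (src : Fin N → Fin M)
    (hsrc : ∀ m, (Finset.univ.filter fun i => src i = m).card = n m)
    (zstar : Fin K) (hzT : 0 < qT zstar)
    (hzS : ∀ m, 0 < n m → qsrc m zstar < 1)
    (θ : (Fin N → Fin K × ℝ) → ℝ) (hθ : Measurable θ)
    (C : ℝ) (hC : 0 < C) :
    ∃ κ : Kernel (Fin K) ℝ, IsMarkovKernel κ ∧
      (∀ z, ∫ y, (y - ∫ y', y' ∂(κ z)) ^ 2 ∂(κ z) ≤ σ ^ 2) ∧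
      C ≤ ∫ D, (θ D - ∑ z, qT z * ∫ y, y ∂(κ z)) ^ 2 ∂(jointLaw qsrc κ src) := by
  classical
  -- every sampled source has positive mass on some group ≠ zstar
  have hz0 : ∀ i : Fin N, ∃ z : Fin K, z ≠ zstar ∧ 0 < qsrc (src i) z := by
    intro i
    have hn : 0 < n (src i) := by
      rw [← hsrc (src i)]
      exact Finset.card_pos.mpr ⟨i, by simp⟩
    have hlt : qsrc (src i) zstar < 1 := hzS (src i) hn
    by_contra h
    push_neg at h
    have hz : ∀ z ∈ Finset.univ.erase zstar, qsrc (src i) z = 0 := by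
      intro z hzmem
      have hne : z ≠ zstar := (Finset.mem_erase.mp hzmem).1
      exact le_antisymm (h z hne) ((hqsrc (src i)).1 z)
    have hsum : ∑ z, qsrc (src i) z = qsrc (src i) zstar := by
      rw [← Finset.add_sum_erase _ _ (Finset.mem_univ zstar),
        Finset.sum_eq_zero hz, add_zero]
    rw [(hqsrc (src i)).2] at hsum
    linarith
  choose z0 hz0ne hz0pos using hz0
  set p : ℝ := ∏ i, qsrc (src i) (z0 i) with hp_def
  have hp : 0 < p := Finset.prod_pos fun i _ => hz0pos i
  set d₀ : Fin N → Fin K × ℝ := fun i => (z0 i, (0 : ℝ)) with hd₀_def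
  set a : ℝ := (θ d₀ - Real.sqrt (C / p)) / qT zstar with ha_def
  set f : Fin K → ℝ := fun z => if z = zstar then a else 0 with hf_def
  have hfm : Measurable f := measurable_of_countable f
  refine ⟨Kernel.deterministic f hfm, inferInstance, ?_, ?_⟩
  · intro z
    rw [Kernel.deterministic_apply]
    simp [integral_dirac, sq_nonneg]
  -- main risk bound
  have hCp : 0 ≤ C / p := le_of_lt (div_pos hC hp)
  -- the population mean
  have hmean : ∑ z, qT z * ∫ y, y ∂((Kernel.deterministic f hfm) z)
      = θ d₀ - Real.sqrt (C / p) := by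
    have h1 : ∀ z, ∫ y, y ∂((Kernel.deterministic f hfm) z) = f z := by
      intro z; rw [Kernel.deterministic_apply, integral_dirac]
    simp only [h1]; simp only [hf_def, mul_ite, mul_zero]
    rw [Finset.sum_ite_eq' Finset.univ zstar fun z => qT z * a]
    simp [ha_def, mul_div_cancel₀ _ (ne_of_gt hzT)]
  set t : ℝ := θ d₀ - Real.sqrt (C / p) with ht_def
  set g : (Fin N → Fin K × ℝ) → ℝ := fun D => (θ D - t) ^ 2 with hg_def
  have hgm : Measurable g := (hθ.sub measurable_const).pow measurable_const
  have hgnn : ∀ D, 0 ≤ g D := fun D => sq_nonneg _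
  -- component measures
  set ν : Fin N → Measure (Fin K × ℝ) := fun i =>
    (discMeasure (qsrc (src i))).bind
      fun z => ((Kernel.deterministic f hfm) z).map fun y => (z, y) with hν_def
  have hνapp : ∀ (i : Fin N) (s : Set (Fin K × ℝ)), MeasurableSet s →
      ν i s = ∑ z, ENNReal.ofReal (qsrc (src i) z) * s.indicator 1 (z, f z) := by
    intro i s hs
    rw [hν_def]
    rw [Measure.bind_apply hs (measurable_of_countable _).aemeasurable]
    rw [discMeasure, lintegral_finset_sum_measure]
    congr 1
    ext z
    rw [lintegral_smul_measure, lintegral_dirac]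
    congr 1
    rw [Kernel.deterministic_apply, Measure.map_dirac' (measurable_prodMk_left),
      Measure.dirac_apply]
  have hνprob : ∀ i, IsProbabilityMeasure (ν i) := by
    intro i
    constructor
    rw [hνapp i Set.univ MeasurableSet.univ]
    simp only [Set.indicator_univ, Pi.one_apply, mul_one]
    rw [← ENNReal.ofReal_sum_of_nonneg fun z _ => (hqsrc (src i)).1 z,
      (hqsrc (src i)).2, ENNReal.ofReal_one]
  haveI := hνprob
  have hjoint : jointLaw qsrc (Kernel.deterministic f hfm) src = Measure.pi ν := rfl
  haveI : IsProbabilityMeasure (jointLaw qsrc (Kernel.deterministic f hfm) src) := by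
    rw [hjoint]; infer_instance
  set μ : Measure (Fin N → Fin K × ℝ) := jointLaw qsrc (Kernel.deterministic f hfm) src
  -- support set
  set A : Set (Fin K × ℝ) := Set.range fun z => (z, f z) with hA_def
  have hAfin : A.Finite := Set.finite_range _
  have hνA : ∀ i, ν i Aᶜ = 0 := by
    intro i
    rw [hνapp i Aᶜ hAfin.measurableSet.compl]
    apply Finset.sum_eq_zero
    intro z _
    have : (z, f z) ∈ A := Set.mem_range_self z
    simp [Set.indicator_of_notMem, this]
  set B : Set (Fin N → Fin K × ℝ) := Set.univ.pi fun _ => A with hB_def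
  have hBfin : B.Finite := Set.Finite.pi fun _ => hAfin
  have hμB : μ Bᶜ = 0 := by
    have hsub : Bᶜ ⊆ ⋃ i, Function.eval i ⁻¹' Aᶜ := by
      intro D hD
      simp only [hB_def, Set.mem_compl_iff, Set.mem_pi, Set.mem_univ, true_implies,
        not_forall] at hD
      obtain ⟨i, hi⟩ := hD
      exact Set.mem_iUnion.mpr ⟨i, hi⟩
    refine measure_mono_null hsub (measure_iUnion_null fun i => ?_)
    rw [hjoint]
    exact Measure.pi_eval_preimage_null _ (hνA i)
  -- integrability
  obtain ⟨b, hb⟩ := (hBfin.image fun D => ‖g D‖).bddAbove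
  have hint : Integrable g μ := by
    refine Integrable.mono' (integrable_const b) hgm.aestronglyMeasurable ?_
    rw [Filter.eventually_iff, mem_ae_iff]
    refine measure_mono_null (fun D hD => ?_) hμB
    exact fun hDB => hD (hb (Set.mem_image_of_mem _ hDB))
  -- the atom has mass ≥ p
  have hatom : ENNReal.ofReal p ≤ μ {d₀} := by
    have h1 : ({d₀} : Set (Fin N → Fin K × ℝ)) = Set.univ.pi fun i => {d₀ i} := by
      rw [Set.univ_pi_singleton]
    rw [h1, hjoint, Measure.pi_pi]
    rw [hp_def, ENNReal.ofReal_prod_of_nonneg fun i _ => le_of_lt (hz0pos i)]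
    refine Finset.prod_le_prod' fun i _ => ?_
    rw [hνapp i {d₀ i} (MeasurableSet.singleton _)]
    refine Finset.single_le_sum (f := fun z =>
      ENNReal.ofReal (qsrc (src i) z) * Set.indicator {d₀ i} 1 (z, f z))
      (fun z _ => zero_le) (Finset.mem_univ (z0 i)) |>.trans_eq' ?_ |>.trans_eq rfl
    have hfz : f (z0 i) = 0 := by simp [hf_def, hz0ne i]
    have : ((z0 i, f (z0 i)) : Fin K × ℝ) = d₀ i := by simp [hd₀_def, hfz]
    rw [this]
    simp
  have hμd_ne_top : μ {d₀} ≠ ⊤ := measure_ne_top μ _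
  -- lower bound of integral
  have hg0 : g d₀ = C / p := by
    simp only [hg_def, ht_def]
    rw [sub_sub_cancel, Real.sq_sqrt hCp]
  have hlow : (μ {d₀}).toReal * g d₀ ≤ ∫ D, g D ∂μ := by
    have h1 : ∫ D, g D ∂(μ.restrict {d₀}) = (μ {d₀}).toReal * g d₀ := by
      rw [Measure.restrict_singleton, integral_smul_measure, integral_dirac, smul_eq_mul]
    rw [← h1]
    exact integral_mono_measure Measure.restrict_le_self
      (Filter.Eventually.of_forall hgnn) hint
  have hptoReal : p ≤ (μ {d₀}).toReal := by
    have := ENNReal.toReal_mono hμd_ne_top hatom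
    rwa [ENNReal.toReal_ofReal (le_of_lt hp)] at this
  have hfinal : C ≤ ∫ D, g D ∂μ := by
    calc C = (C / p) * p := by field_simp
    _ ≤ (C / p) * (μ {d₀}).toReal := by
        exact mul_le_mul_of_nonneg_left hptoReal hCp
    _ = (μ {d₀}).toReal * g d₀ := by rw [hg0, mul_comm]
    _ ≤ ∫ D, g D ∂μ := hlow
  calc C ≤ ∫ D, g D ∂μ := hfinal
  _ = ∫ D, (θ D - ∑ z, qT z * ∫ y, y ∂((Kernel.deterministic f hfm) z)) ^ 2 ∂μ := by
      rw [hmean]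
end
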